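/- arXiv:1507.04242 — 6 statements merged into one kernel-verified Lean document; each statement's English description precedes it below -/
import Mathlib

section
/- Sub-traveling sum scaling: for α ∈ (0,2), letting A_j = ℓ_{j−1} − ℓ_{j+1} for the occupied sub-traveling cells (with appropriate parity), the sum Q_n = Σ_{j=0}^{n−1} A_j j² satisfies Q_n / n^{2−α} → α/(2 − α) as n → ∞. -/
open Filter Topology Finset

noncomputable def ell (α : ℝ) (j : ℕ) : ℝ := ((j : ℝ) + (2:ℝ) ^ (1/α)) ^ (-α)

/-- Sub-traveling sum: sum over cells 0 ≤ j ≤ n-1 of the same parity as n. -/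
noncomputable def Qsub (α : ℝ) (n : ℕ) : ℝ :=
  ∑ j ∈ Finset.range n,
    (if j % 2 = n % 2 ∧ 1 ≤ j then ell α (j - 1) - ell α (j + 1) else 0) * (j:ℝ)^2

section Helpers

open Asymptotics

lemma rat_rpow {q : ℝ} {r : ℕ → ℝ} {c : ℝ} (hc : 0 < c) (hr : Tendsto r atTop (𝓝 c)) :
    Tendsto (fun N => (r N) ^ q) atTop (𝓝 (c ^ q)) :=
  ((Real.continuousAt_rpow_const c q (Or.inl hc.ne')).tendsto).comp hr

lemma inv_cast_tendsto : Tendsto (fun N : ℕ => ((N:ℝ))⁻¹) atTop (𝓝 0) :=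
  tendsto_inv_atTop_zero.comp tendsto_natCast_atTop_atTop

lemma ratio_one (a : ℝ) : Tendsto (fun N : ℕ => ((N:ℝ)+a)/(N:ℝ)) atTop (𝓝 1) := by
  have h : (fun N : ℕ => ((N:ℝ)+a)/(N:ℝ)) =ᶠ[atTop] fun N => 1 + a * ((N:ℝ))⁻¹ := by
    filter_upwards [eventually_gt_atTop 0] with N hN
    have hN' : (N:ℝ) ≠ 0 := by positivity
    field_simp
  rw [tendsto_congr' h]
  have := (tendsto_const_nhds (x := (1:ℝ))).add ((tendsto_const_nhds (x := a)).mul inv_cast_tendsto)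
  simpa using this

lemma two_ratio (a : ℝ) : Tendsto (fun N : ℕ => (2*(N:ℝ)+a)/(N:ℝ)) atTop (𝓝 2) := by
  have h : (fun N : ℕ => (2*(N:ℝ)+a)/(N:ℝ)) =ᶠ[atTop] fun N => 2 + a * ((N:ℝ))⁻¹ := by
    filter_upwards [eventually_gt_atTop 0] with N hN
    have hN' : (N:ℝ) ≠ 0 := by positivity
    field_simp
  rw [tendsto_congr' h]
  have := (tendsto_const_nhds (x := (2:ℝ))).add ((tendsto_const_nhds (x := a)).mul inv_cast_tendsto)
  simpa using this

lemma half_ratio (a : ℝ) (ha : 0 ≤ a) :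
    Tendsto (fun N : ℕ => (N:ℝ)/(2*(N:ℝ)+a)) atTop (𝓝 (1/2)) := by
  have h : (fun N : ℕ => (N:ℝ)/(2*(N:ℝ)+a)) =ᶠ[atTop] fun N => ((2:ℝ) + a * ((N:ℝ))⁻¹)⁻¹ := by
    filter_upwards [eventually_gt_atTop 0] with N hN
    have hN' : (0:ℝ) < N := by exact_mod_cast hN
    have h2 : 2*(N:ℝ)+a ≠ 0 := by positivity
    have hN0 : (N:ℝ) ≠ 0 := hN'.ne'
    field_simp
  rw [tendsto_congr' h]
  have h2 : Tendsto (fun N : ℕ => (2:ℝ) + a * ((N:ℝ))⁻¹) atTop (𝓝 2) := by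
    have := (tendsto_const_nhds (x := (2:ℝ))).add ((tendsto_const_nhds (x := a)).mul inv_cast_tendsto)
    simpa using this
  have := h2.inv₀ (by norm_num)
  simpa [one_div] using this

lemma natCast_rpow_atTop {q : ℝ} (hq : 0 < q) :
    Tendsto (fun N : ℕ => (N:ℝ) ^ q) atTop atTop :=
  (tendsto_rpow_atTop hq).comp tendsto_natCast_atTop_atTop

lemma upper_mono {p : ℝ} (hp : -1 < p) (hp0 : 0 ≤ p) (N : ℕ) :
    (∑ m ∈ range N, (m:ℝ)^p) ≤ (N:ℝ)^(p+1)/(p+1) := by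
  have hp1 : (0:ℝ) < p + 1 := by linarith
  have hmono : MonotoneOn (fun x : ℝ => x ^ p) (Set.Icc (0:ℝ) (0 + N)) := by
    intro x hx y hy hxy
    exact Real.rpow_le_rpow hx.1 hxy hp0
  have h2 := hmono.sum_le_integral
  simp only [zero_add] at h2
  have hint : ∫ x in (0:ℝ)..(N:ℝ), x ^ p = ((N:ℝ)^(p+1) - 0^(p+1))/(p+1) :=
    integral_rpow (Or.inl hp)
  rw [hint, Real.zero_rpow hp1.ne', sub_zero] at h2
  exact h2

lemma lower_mono {p : ℝ} (hp : -1 < p) (hp0 : 0 ≤ p) (N : ℕ) :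
    ((N - 1 : ℕ):ℝ)^(p+1)/(p+1) ≤ ∑ m ∈ range N, (m:ℝ)^p := by
  have hp1 : (0:ℝ) < p + 1 := by linarith
  have hmono : MonotoneOn (fun x : ℝ => x ^ p) (Set.Icc (0:ℝ) (0 + (N-1:ℕ))) := by
    intro x hx y hy hxy
    exact Real.rpow_le_rpow hx.1 hxy hp0
  have h2 := hmono.integral_le_sum
  simp only [zero_add] at h2
  have hint : ∫ x in (0:ℝ)..((N-1:ℕ):ℝ), x ^ p = (((N-1:ℕ):ℝ)^(p+1) - 0^(p+1))/(p+1) :=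
    integral_rpow (Or.inl hp)
  rw [hint, Real.zero_rpow hp1.ne', sub_zero] at h2
  refine h2.trans ?_
  rcases Nat.eq_zero_or_pos N with h | h
  · simp [h]
  · have hN : N = (N - 1) + 1 := by omega
    rw [hN, Finset.sum_range_succ']
    have h0 : (0:ℝ) ≤ ((0:ℕ):ℝ)^p := Real.rpow_nonneg (by norm_num) p
    rw [← hN]
    linarith [le_refl (∑ i ∈ range (N-1), ((i+1:ℕ):ℝ)^p)]

lemma lower_anti {p : ℝ} (hp : -1 < p) (hp0 : p < 0) (N : ℕ) (hN : 1 ≤ N) :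
    ((N:ℝ)^(p+1) - 1)/(p+1) ≤ ∑ m ∈ range N, (m:ℝ)^p := by
  have hanti : AntitoneOn (fun x : ℝ => x ^ p) (Set.Icc ((1:ℕ):ℝ) ((N:ℕ):ℝ)) := by
    intro x hx y hy hxy
    have h1 : (1:ℝ) ≤ x := by exact_mod_cast hx.1
    exact Real.rpow_le_rpow_of_nonpos (lt_of_lt_of_le zero_lt_one h1) hxy hp0.le
  have h2 := hanti.integral_le_sum_Ico (by exact_mod_cast hN)
  rw [integral_rpow (Or.inl hp)] at h2
  norm_num at h2
  refine h2.trans ?_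
  apply Finset.sum_le_sum_of_subset_of_nonneg
  · intro x hx
    simp only [Finset.mem_Ico, Finset.mem_range] at *
    omega
  · intro i _ _
    exact Real.rpow_nonneg (Nat.cast_nonneg i) p

lemma upper_anti {p : ℝ} (hp : -1 < p) (hp0 : p < 0) (N : ℕ) (hN : 2 ≤ N) :
    (∑ m ∈ range N, (m:ℝ)^p) ≤ 1 + (N:ℝ)^(p+1)/(p+1) := by
  have hp1 : (0:ℝ) < p + 1 := by linarith
  have hanti : AntitoneOn (fun x : ℝ => x ^ p) (Set.Icc ((1:ℕ):ℝ) ((N-1:ℕ):ℝ)) := by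
    intro x hx y hy hxy
    have h1 : (1:ℝ) ≤ x := by exact_mod_cast hx.1
    exact Real.rpow_le_rpow_of_nonpos (lt_of_lt_of_le zero_lt_one h1) hxy hp0.le
  have h2 := hanti.sum_le_integral_Ico (by omega : 1 ≤ N - 1)
  rw [integral_rpow (Or.inl hp)] at h2
  norm_num at h2
  have hre : ∑ i ∈ Ico 1 (N-1), (((i:ℕ):ℝ)+1)^p = ∑ m ∈ Ico 2 N, ((m:ℕ):ℝ)^p := by
    have := Finset.sum_Ico_add' (fun m : ℕ => ((m:ℕ):ℝ)^p) 1 (N-1) 1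
    push_cast at this
    simpa [show N - 1 + 1 = N by omega] using this
  rw [hre] at h2
  have hsplit : ∑ m ∈ range N, (m:ℝ)^p
      = ((0:ℕ):ℝ)^p + ((1:ℕ):ℝ)^p + ∑ m ∈ Ico 2 N, ((m:ℕ):ℝ)^p := by
    rw [Finset.range_eq_Ico, Finset.sum_eq_sum_Ico_succ_bot (by omega : 0 < N),
      Finset.sum_eq_sum_Ico_succ_bot (by omega : 1 < N)]
    norm_num
    ring
  rw [hsplit]
  have hz : ((0:ℕ):ℝ)^p = 0 := by
    norm_num
    exact Real.zero_rpow (by linarith)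
  have ho : ((1:ℕ):ℝ)^p = 1 := by norm_num
  rw [hz, ho]
  have hmono : ((N-1:ℕ):ℝ)^(p+1) ≤ (N:ℝ)^(p+1) :=
    Real.rpow_le_rpow (Nat.cast_nonneg _) (by exact_mod_cast Nat.sub_le N 1) hp1.le
  have hle : (((N-1:ℕ):ℝ)^(p+1) - 1)/(p+1) ≤ (N:ℝ)^(p+1)/(p+1) := by
    apply (div_le_div_iff_of_pos_right hp1).mpr
    linarith
  linarith

lemma sum_pow_asymp {p : ℝ} (hp : -1 < p) :
    Tendsto (fun N : ℕ => (∑ m ∈ range N, (m:ℝ)^p) / (N:ℝ)^(p+1)) atTop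
      (𝓝 (1/(p+1))) := by
  have hp1 : (0:ℝ) < p + 1 := by linarith
  have hinv : Tendsto (fun N : ℕ => ((N:ℝ)^(p+1))⁻¹) atTop (𝓝 0) :=
    (natCast_rpow_atTop hp1).inv_tendsto_atTop
  rcases le_or_gt 0 p with hp0 | hp0
  · have hb : Tendsto (fun N : ℕ => ((N-1:ℕ):ℝ)^(p+1)/(N:ℝ)^(p+1)) atTop (𝓝 1) := by
      have h1 : Tendsto (fun N : ℕ => (((N:ℝ)+(-1))/(N:ℝ))) atTop (𝓝 1) := ratio_one (-1)
      have h2 := rat_rpow (q := p+1) one_pos h1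
      rw [Real.one_rpow] at h2
      apply h2.congr'
      filter_upwards [eventually_ge_atTop 1] with N hN
      have hc : ((N-1:ℕ):ℝ) = (N:ℝ) + (-1) := by
        push_cast [Nat.cast_sub hN]; ring
      have hnn : (0:ℝ) ≤ (N:ℝ) + (-1) := by
        have : (1:ℝ) ≤ (N:ℝ) := by exact_mod_cast hN
        linarith
      rw [Real.div_rpow hnn (Nat.cast_nonneg N), hc]
    apply tendsto_of_tendsto_of_tendsto_of_le_of_le'
      (g := fun N : ℕ => ((N-1:ℕ):ℝ)^(p+1)/(N:ℝ)^(p+1) * (1/(p+1)))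
      (h := fun _ : ℕ => 1/(p+1))
    · simpa using hb.mul_const (1/(p+1))
    · exact tendsto_const_nhds
    · filter_upwards [eventually_ge_atTop 1] with N hN
      have hpos : (0:ℝ) < (N:ℝ)^(p+1) := by
        apply Real.rpow_pos_of_pos
        exact_mod_cast Nat.pos_of_ne_zero (by omega)
      have h3 := (div_le_div_iff_of_pos_right hpos).mpr (lower_mono hp hp0 N)
      calc ((N-1:ℕ):ℝ)^(p+1)/(N:ℝ)^(p+1) * (1/(p+1))
          = ((N-1:ℕ):ℝ)^(p+1)/(p+1)/(N:ℝ)^(p+1) := by ring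
        _ ≤ _ := h3
    · filter_upwards [eventually_ge_atTop 1] with N hN
      have hpos : (0:ℝ) < (N:ℝ)^(p+1) := by
        apply Real.rpow_pos_of_pos
        exact_mod_cast Nat.pos_of_ne_zero (by omega)
      have h3 := (div_le_div_iff_of_pos_right hpos).mpr (upper_mono hp hp0 N)
      calc (∑ m ∈ range N, (m:ℝ)^p) / (N:ℝ)^(p+1) ≤ (N:ℝ)^(p+1)/(p+1)/(N:ℝ)^(p+1) := h3
        _ = 1/(p+1) := by field_simp
  · apply tendsto_of_tendsto_of_tendsto_of_le_of_le'
      (g := fun N : ℕ => 1/(p+1) - (1/(p+1)) * ((N:ℝ)^(p+1))⁻¹)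
      (h := fun N : ℕ => ((N:ℝ)^(p+1))⁻¹ + 1/(p+1))
    · have := (tendsto_const_nhds (x := 1/(p+1))).sub
        ((tendsto_const_nhds (x := 1/(p+1))).mul hinv)
      simpa using this
    · have := hinv.add (tendsto_const_nhds (x := 1/(p+1)))
      simpa using this
    · filter_upwards [eventually_ge_atTop 1] with N hN
      have hpos : (0:ℝ) < (N:ℝ)^(p+1) := by
        apply Real.rpow_pos_of_pos
        exact_mod_cast Nat.pos_of_ne_zero (by omega)
      have h3 := (div_le_div_iff_of_pos_right hpos).mpr (lower_anti hp hp0 N hN)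
      calc 1/(p+1) - (1/(p+1)) * ((N:ℝ)^(p+1))⁻¹
          = ((N:ℝ)^(p+1) - 1)/(p+1)/(N:ℝ)^(p+1) := by field_simp
        _ ≤ _ := h3
    · filter_upwards [eventually_ge_atTop 2] with N hN
      have hpos : (0:ℝ) < (N:ℝ)^(p+1) := by
        apply Real.rpow_pos_of_pos
        exact_mod_cast Nat.pos_of_ne_zero (by omega)
      have h3 := (div_le_div_iff_of_pos_right hpos).mpr (upper_anti hp hp0 N hN)
      have heq : (1 + (N:ℝ)^(p+1)/(p+1))/(N:ℝ)^(p+1) = ((N:ℝ)^(p+1))⁻¹ + 1/(p+1) := by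
        rw [add_div, div_right_comm, div_self hpos.ne', one_div]
      exact h3.trans_eq heq

lemma sum_asymp {p L : ℝ} (hp : -1 < p) {u : ℕ → ℝ}
    (hu : Tendsto (fun m : ℕ => u m / (m:ℝ)^p) atTop (𝓝 L)) :
    Tendsto (fun N : ℕ => (∑ m ∈ range N, u m) / (N:ℝ)^(p+1)) atTop (𝓝 (L/(p+1))) := by
  have hp1 : (0:ℝ) < p + 1 := by linarith
  set g : ℕ → ℝ := fun m => (m:ℝ)^p with hg
  have hg0 : (0:ℕ→ℝ) ≤ g := fun m => Real.rpow_nonneg (Nat.cast_nonneg m) p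
  have hgpos : ∀ m : ℕ, 1 ≤ m → 0 < g m := fun m hm =>
    Real.rpow_pos_of_pos (by exact_mod_cast Nat.pos_of_ne_zero (by omega)) p
  have h1 := sum_pow_asymp hp
  have hSg : Tendsto (fun N : ℕ => ∑ m ∈ range N, g m) atTop atTop := by
    have h2 := h1.pos_mul_atTop (by positivity) (natCast_rpow_atTop hp1)
    apply h2.congr'
    filter_upwards [eventually_ge_atTop 1] with N hN
    have : ((N:ℝ))^(p+1) ≠ 0 :=
      (Real.rpow_pos_of_pos (by exact_mod_cast Nat.pos_of_ne_zero (by omega)) _).ne'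
    field_simp
    rfl
  set f : ℕ → ℝ := fun m => u m - L * g m with hf
  have hfo : f =o[atTop] g := by
    rw [Asymptotics.isLittleO_iff_tendsto']
    · have h3 : Tendsto (fun m : ℕ => u m / g m - L) atTop (𝓝 (L - L)) :=
        hu.sub tendsto_const_nhds
      rw [sub_self] at h3
      apply h3.congr'
      filter_upwards [eventually_ge_atTop 1] with m hm
      have hne := (hgpos m hm).ne'
      field_simp [hf]
      ring
    · filter_upwards [eventually_ge_atTop 1] with m hm h
      exact absurd h (hgpos m hm).ne'
  have hsum := hfo.sum_range hg0 hSg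
  have h0 : Tendsto (fun N : ℕ => (∑ m ∈ range N, f m)/(∑ m ∈ range N, g m)) atTop (𝓝 0) :=
    hsum.tendsto_div_nhds_zero
  have hSgpos : ∀ᶠ N : ℕ in atTop, 0 < ∑ m ∈ range N, g m := hSg.eventually_gt_atTop 0
  have hA : Tendsto (fun N : ℕ => (∑ m ∈ range N, f m)/(N:ℝ)^(p+1)) atTop (𝓝 0) := by
    have h4 := h0.mul h1
    rw [zero_mul] at h4
    apply h4.congr'
    filter_upwards [hSgpos] with N hN
    rw [div_mul_div_comm, mul_comm (∑ m ∈ range N, f m), mul_div_mul_left _ _ hN.ne']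
  have hB := (tendsto_const_nhds (x := L)).mul h1
  have hC := hA.add hB
  have hval : (0:ℝ) + L * (1/(p+1)) = L/(p+1) := by ring
  rw [hval] at hC
  apply hC.congr
  intro N
  have hfs : ∑ m ∈ range N, f m = (∑ m ∈ range N, u m) - L * ∑ m ∈ range N, g m := by
    simp [hf, Finset.sum_sub_distrib, Finset.mul_sum]
  rw [hfs]
  ring

lemma slope_lim {α : ℝ} :
    Tendsto (fun t : ℝ => (1 - (1+t)^(-α))/t) (𝓝[≠] 0) (𝓝 α) := by
  have h2 : HasDerivAt (fun t : ℝ => 1 + t) 1 0 := (hasDerivAt_id 0).const_add 1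
  have h1 : HasDerivAt (fun x : ℝ => x^(-α)) (-α * (1:ℝ)^(-α-1)) ((fun t : ℝ => 1+t) 0) := by
    simpa using Real.hasDerivAt_rpow_const (x := 1) (p := -α) (Or.inl one_ne_zero)
  have hd : HasDerivAt (fun t : ℝ => (1+t)^(-α)) (-α) 0 := by
    have := h1.comp 0 h2
    simpa [Real.one_rpow, Function.comp_def] using this
  have hslope := hasDerivAt_iff_tendsto_slope.mp hd
  have hneg := hslope.neg
  rw [neg_neg] at hneg
  apply hneg.congr
  intro t
  simp only [slope_def_field, add_zero, Real.one_rpow, sub_zero]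
  rw [← neg_div, neg_sub]

lemma lemD {α a b : ℝ} (ha : 0 ≤ a) (hab : a < b) :
    Tendsto (fun m : ℕ => (m:ℝ)^(α+1) * ((2*(m:ℝ)+a)^(-α) - (2*(m:ℝ)+b)^(-α))) atTop
      (𝓝 ((b-a) * ((1/2:ℝ)^(α+1) * α))) := by
  have hba : (0:ℝ) < b - a := by linarith
  have h2m : Tendsto (fun m : ℕ => 2*(m:ℝ)+a) atTop atTop :=
    tendsto_atTop_add_const_right _ a (Tendsto.const_mul_atTop two_pos tendsto_natCast_atTop_atTop)
  have hstep2 : Tendsto (fun m : ℕ => (b-a)/(2*(m:ℝ)+a)) atTop (𝓝[≠] 0) := by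
    rw [tendsto_nhdsWithin_iff]
    constructor
    · have := h2m.inv_tendsto_atTop.const_mul (b-a)
      simpa [div_eq_mul_inv] using this
    · filter_upwards [h2m.eventually_gt_atTop 0] with m hm
      exact (div_pos hba hm).ne'
  have hhalf : Tendsto (fun m : ℕ => ((m:ℝ)/(2*(m:ℝ)+a))^(α+1)) atTop
      (𝓝 ((1/2:ℝ)^(α+1))) := rat_rpow (by norm_num) (half_ratio a ha)
  have hcomp : Tendsto (fun m : ℕ =>
      (1 - (1+(b-a)/(2*(m:ℝ)+a))^(-α))/((b-a)/(2*(m:ℝ)+a))) atTop (𝓝 α) :=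
    slope_lim.comp hstep2
  have main := (hhalf.mul hcomp).const_mul (b-a)
  apply main.congr'
  filter_upwards [eventually_ge_atTop 1] with m hm
  have hm1 : (1:ℝ) ≤ (m:ℝ) := by exact_mod_cast hm
  have hx : (0:ℝ) < 2*(m:ℝ)+a := by linarith
  set x : ℝ := 2*(m:ℝ)+a with hxdef
  have ht : (0:ℝ) < (b-a)/x := div_pos hba hx
  have h1t : (0:ℝ) < 1 + (b-a)/x := by linarith
  have hxt : 2*(m:ℝ)+b = x*(1+(b-a)/x) := by
    field_simp
    rw [hxdef]; ring
  rw [hxt, Real.mul_rpow hx.le h1t.le, Real.div_rpow (Nat.cast_nonneg m) hx.le]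
  have hxx : x^(α+1) * x^(-α) = x := by
    rw [← Real.rpow_add hx]
    norm_num
  set A : ℝ := x^(α+1) with hA
  set B : ℝ := x^(-α) with hB
  set C : ℝ := (1+(b-a)/x)^(-α) with hC
  set M : ℝ := (m:ℝ)^(α+1) with hM
  have hApos : 0 < A := Real.rpow_pos_of_pos hx _
  field_simp
  rw [← hxx]
  ring

end Helpers

noncomputable def ue (α : ℝ) (m : ℕ) : ℝ :=
  (ell α (2*m-1) - ell α (2*m+1)) * ((2*m:ℕ):ℝ)^2

noncomputable def uo (α : ℝ) (m : ℕ) : ℝ :=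
  (ell α (2*m) - ell α (2*m+2)) * ((2*m+1:ℕ):ℝ)^2

lemma Qsub_even (α : ℝ) (N : ℕ) : Qsub α (2*N) = ∑ m ∈ range N, ue α m := by
  suffices h : ∀ M : ℕ, ∑ j ∈ range (2*M),
      (if j % 2 = 0 ∧ 1 ≤ j then ell α (j - 1) - ell α (j + 1) else 0) * (j:ℝ)^2
      = ∑ m ∈ range M, ue α m by
    rw [Qsub, Nat.mul_mod_right]
    exact h N
  intro N
  induction N with
  | zero => simp
  | succ N ih =>
    rw [show 2*(N+1) = (2*N)+1+1 by ring, Finset.sum_range_succ, Finset.sum_range_succ, ih,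
      Finset.sum_range_succ]
    rw [if_neg (by omega : ¬((2*N+1) % 2 = 0 ∧ 1 ≤ 2*N+1))]
    simp only [if_false, zero_mul, add_zero]
    congr 1
    rcases Nat.eq_zero_or_pos N with h | h
    · simp [h, ue]
    · have h2 : (2*N) % 2 = 0 ∧ 1 ≤ 2*N := ⟨Nat.mul_mod_right 2 N, by omega⟩
      rw [if_pos h2, ue]

lemma Qsub_odd (α : ℝ) (N : ℕ) : Qsub α (2*N+1) = ∑ m ∈ range N, uo α m := by
  suffices h : ∀ M : ℕ, ∑ j ∈ range (2*M+1),
      (if j % 2 = 1 ∧ 1 ≤ j then ell α (j - 1) - ell α (j + 1) else 0) * (j:ℝ)^2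
      = ∑ m ∈ range M, uo α m by
    rw [Qsub, (by omega : (2*N+1) % 2 = 1)]
    exact h N
  intro N
  induction N with
  | zero => simp
  | succ N ih =>
    rw [show 2*(N+1)+1 = (2*N+1)+1+1 by ring, Finset.sum_range_succ, Finset.sum_range_succ, ih,
      Finset.sum_range_succ]
    rw [if_neg (by omega : ¬((2*N+1+1) % 2 = 1 ∧ 1 ≤ 2*N+1+1))]
    simp only [if_false, zero_mul, add_zero]
    congr 1
    have h2 : (2*N+1) % 2 = 1 ∧ 1 ≤ 2*N+1 := ⟨by omega, by omega⟩
    rw [if_pos h2, uo]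
    norm_num

lemma tendsto_even_odd {x : ℕ → ℝ} {a : ℝ}
    (he : Tendsto (fun N => x (2*N)) atTop (𝓝 a))
    (ho : Tendsto (fun N => x (2*N+1)) atTop (𝓝 a)) :
    Tendsto x atTop (𝓝 a) := by
  rw [Metric.tendsto_atTop] at he ho ⊢
  intro ε hε
  obtain ⟨N1, h1⟩ := he ε hε
  obtain ⟨N2, h2⟩ := ho ε hε
  refine ⟨2*N1 + 2*N2 + 2, fun n hn => ?_⟩
  rcases Nat.even_or_odd n with ⟨k, hk⟩ | ⟨k, hk⟩
  · have hk1 : N1 ≤ k := by omega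
    have := h1 k hk1
    rwa [show 2*k = n by omega] at this
  · have hk2 : N2 ≤ k := by omega
    have := h2 k hk2
    rwa [show 2*k+1 = n by omega] at this

section Main

variable {α : ℝ} (hα : 0 < α) (hα2 : α < 2)

lemma kappa_pos : (0:ℝ) < (2:ℝ)^(1/α) := Real.rpow_pos_of_pos two_pos _

lemma kappa_ge_one (hα : 0 < α) : (1:ℝ) ≤ (2:ℝ)^(1/α) :=
  Real.one_le_rpow (by norm_num) (by positivity)

lemma pow_div_key {m : ℕ} (hm : 1 ≤ m) {α : ℝ} :
    ((m:ℝ))^(2:ℕ) / (m:ℝ)^(1-α) = (m:ℝ)^(α+1) := by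
  have hm0 : (0:ℝ) < m := by exact_mod_cast Nat.pos_of_ne_zero (by omega)
  rw [← Real.rpow_natCast (m:ℝ) 2, ← Real.rpow_sub hm0]
  norm_num
  rw [show (2:ℝ) - (1-α) = α+1 by ring]

lemma ue_tendsto (hα : 0 < α) :
    Tendsto (fun m : ℕ => ue α m / (m:ℝ)^(1-α)) atTop
      (𝓝 (4 * (2 * ((1/2:ℝ)^(α+1) * α)))) := by
  set κ : ℝ := (2:ℝ)^(1/α) with hκ
  have hκ1 : (1:ℝ) ≤ κ := kappa_ge_one hα
  have hD := lemD (α := α) (a := κ-1) (b := κ+1) (by linarith) (by linarith)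
  rw [show (κ+1) - (κ-1) = (2:ℝ) by ring] at hD
  have main := hD.const_mul 4
  apply main.congr'
  filter_upwards [eventually_ge_atTop 1] with m hm
  have hm0 : (0:ℝ) < m := by exact_mod_cast Nat.pos_of_ne_zero (by omega)
  have hkey := pow_div_key hm (α := α)
  rw [ue, ell, ell]
  push_cast [Nat.cast_sub (by omega : 1 ≤ 2*m)]
  rw [show 2*(m:ℝ) - 1 + κ = 2*(m:ℝ)+(κ-1) by ring, show 2*(m:ℝ) + 1 + κ = 2*(m:ℝ)+(κ+1) by ring]
  rw [mul_pow]
  have hne : (m:ℝ)^(1-α) ≠ 0 := (Real.rpow_pos_of_pos hm0 _).ne'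
  rw [← hkey]
  field_simp [hne]
  ring

lemma uo_tendsto (hα : 0 < α) :
    Tendsto (fun m : ℕ => uo α m / (m:ℝ)^(1-α)) atTop
      (𝓝 (4 * (2 * ((1/2:ℝ)^(α+1) * α)))) := by
  set κ : ℝ := (2:ℝ)^(1/α) with hκ
  have hκ1 : (1:ℝ) ≤ κ := kappa_ge_one hα
  have hD := lemD (α := α) (a := κ) (b := κ+2) (by linarith) (by linarith)
  rw [show (κ+2) - κ = (2:ℝ) by ring] at hD
  have hsq : Tendsto (fun m : ℕ => ((2*(m:ℝ)+1)/(m:ℝ))^(2:ℕ)) atTop (𝓝 ((2:ℝ)^(2:ℕ))) :=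
    (two_ratio 1).pow 2
  have main := hD.mul hsq
  rw [show ((2:ℝ) * ((1/2:ℝ)^(α+1) * α)) * ((2:ℝ)^(2:ℕ)) = 4 * (2 * ((1/2:ℝ)^(α+1) * α)) by
    norm_num; ring] at main
  apply main.congr'
  filter_upwards [eventually_ge_atTop 1] with m hm
  have hm0 : (0:ℝ) < m := by exact_mod_cast Nat.pos_of_ne_zero (by omega)
  have hkey := pow_div_key hm (α := α)
  rw [uo, ell, ell]
  push_cast
  rw [show (2*(m:ℝ)) + κ = 2*(m:ℝ)+κ by ring, show 2*(m:ℝ) + 2 + κ = 2*(m:ℝ)+(κ+2) by ring]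
  rw [div_pow]
  have hne : (m:ℝ)^(1-α) ≠ 0 := (Real.rpow_pos_of_pos hm0 _).ne'
  have hne2 : (m:ℝ) ≠ 0 := hm0.ne'
  rw [← hkey]
  field_simp [hne, hne2]

lemma val_key (hα : 0 < α) (hα2 : α < 2) :
    (4 * (2 * ((1/2:ℝ)^(α+1) * α))) / (2-α) * ((2:ℝ)^(2-α))⁻¹ = α / (2-α) := by
  have e1 : (1/2:ℝ)^(α+1) = ((2:ℝ)^(α+1))⁻¹ := by
    rw [one_div, Real.inv_rpow (by norm_num : (0:ℝ) ≤ 2)]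
  have e2 : (2:ℝ)^(α+1) * (2:ℝ)^(2-α) = 8 := by
    rw [← Real.rpow_add two_pos, show α+1+(2-α) = (3:ℝ) by ring,
      show (3:ℝ) = ((3:ℕ):ℝ) by norm_num, Real.rpow_natCast]
    norm_num
  have hp1 : ((2:ℝ)^(α+1)) ≠ 0 := (Real.rpow_pos_of_pos two_pos _).ne'
  have hp2 : ((2:ℝ)^(2-α)) ≠ 0 := (Real.rpow_pos_of_pos two_pos _).ne'
  have h2a : (2:ℝ) - α ≠ 0 := by linarith
  rw [e1]
  field_simp
  rw [e2]
  ring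

lemma heven (hα : 0 < α) (hα2 : α < 2) :
    Tendsto (fun N : ℕ => Qsub α (2*N) / ((2*N:ℕ):ℝ)^(2-α)) atTop (𝓝 (α/(2-α))) := by
  have hue := sum_asymp (by linarith : (-1:ℝ) < 1-α) (ue_tendsto hα)
  rw [show (1-α)+1 = 2-α by ring] at hue
  have main := hue.mul_const ((2:ℝ)^(2-α))⁻¹
  rw [val_key hα hα2] at main
  apply main.congr'
  filter_upwards [eventually_ge_atTop 1] with N hN
  rw [Qsub_even]
  have hcast : ((2*N:ℕ):ℝ) = 2*(N:ℝ) := by push_cast; ring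
  rw [hcast, Real.mul_rpow (by norm_num) (Nat.cast_nonneg N),
    mul_comm ((2:ℝ)^(2-α)), ← div_div]
  ring

lemma hodd (hα : 0 < α) (hα2 : α < 2) :
    Tendsto (fun N : ℕ => Qsub α (2*N+1) / ((2*N+1:ℕ):ℝ)^(2-α)) atTop (𝓝 (α/(2-α))) := by
  have huo := sum_asymp (by linarith : (-1:ℝ) < 1-α) (uo_tendsto hα)
  rw [show (1-α)+1 = 2-α by ring] at huo
  have hratio : Tendsto (fun N : ℕ => ((N:ℝ)/(2*(N:ℝ)+1))^(2-α)) atTop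
      (𝓝 ((1/2:ℝ)^(2-α))) := rat_rpow (by norm_num) (half_ratio 1 (by norm_num))
  have main := huo.mul hratio
  have hv : (4 * (2 * ((1/2:ℝ)^(α+1) * α))) / (2-α) * ((1/2:ℝ)^(2-α)) = α / (2-α) := by
    have : (1/2:ℝ)^(2-α) = ((2:ℝ)^(2-α))⁻¹ := by
      rw [one_div, Real.inv_rpow (by norm_num : (0:ℝ) ≤ 2)]
    rw [this]
    exact val_key hα hα2
  rw [hv] at main
  apply main.congr'
  filter_upwards [eventually_ge_atTop 1] with N hN
  rw [Qsub_odd]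
  have hN0 : (0:ℝ) < (N:ℝ) := by exact_mod_cast Nat.pos_of_ne_zero (by omega)
  have hden : (0:ℝ) < 2*(N:ℝ)+1 := by linarith
  have hcast : ((2*N+1:ℕ):ℝ) = 2*(N:ℝ)+1 := by push_cast; ring
  rw [hcast, Real.div_rpow hN0.le hden.le]
  have h1 : (0:ℝ) < (N:ℝ)^(2-α) := Real.rpow_pos_of_pos hN0 _
  rw [div_mul_div_comm, mul_comm (∑ m ∈ range N, uo α m), mul_div_mul_left _ _ h1.ne']

end Main

theorem subtraveling_sum_scaling (α : ℝ) (hα : 0 < α) (hα2 : α < 2) :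
    Filter.Tendsto (fun n : ℕ => Qsub α n / (n:ℝ) ^ (2 - α))
      Filter.atTop (nhds (α / (2 - α))) := by
  exact tendsto_even_odd (heven hα hα2) (hodd hα hα2)
end

section
/- Mean square displacement of the slicer map: for α ∈ (0,2), the MSD ⟨ΔX²_n⟩ = Σ_{j=−n}^{n} A_j j² satisfies ⟨ΔX²_n⟩ / n^{2−α} → 4/(2 − α) as n → ∞; in particular the transport exponent is 2 − α. -/
open Filter Topology Finset

noncomputable def slicerA (α : ℝ) (n : ℕ) (j : ℤ) : ℝ :=
  if j.natAbs = n then ell α (n - 1)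
  else if j.natAbs < n ∧ j.natAbs % 2 = n % 2 then
    (if j = 0 then 2 * (ell α 0 - ell α 1)
     else ell α (j.natAbs - 1) - ell α (j.natAbs + 1))
  else 0

noncomputable def msd (α : ℝ) (n : ℕ) : ℝ :=
  ∑ j ∈ Finset.Icc (-(n:ℤ)) (n:ℤ), slicerA α n j * (j:ℝ)^2

lemma fold_sum (F : ℤ → ℝ) (n : ℕ) :
    ∑ j ∈ Finset.Icc (-(n:ℤ)) (n:ℤ), F j
      = F 0 + ∑ k ∈ Finset.Icc 1 n, (F (k:ℤ) + F (-(k:ℤ))) := by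
  induction n with
  | zero => simp
  | succ n ih =>
    have h1 : ((n:ℤ)+1) ∉ insert (-((n:ℤ)+1)) (Finset.Icc (-(n:ℤ)) (n:ℤ)) := by
      simp; omega
    have h2 : (-((n:ℤ)+1)) ∉ (Finset.Icc (-(n:ℤ)) (n:ℤ)) := by simp
    have hIcc : Finset.Icc (-((n:ℕ)+1:ℤ)) ((n:ℕ)+1:ℤ)
        = insert ((n:ℤ)+1) (insert (-((n:ℤ)+1)) (Finset.Icc (-(n:ℤ)) (n:ℤ))) := by
      ext j; simp; omega
    have hIccN : Finset.Icc 1 (n+1) = insert (n+1) (Finset.Icc 1 n) := by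
      ext k; simp; omega
    push_cast
    rw [hIcc, Finset.sum_insert h1, Finset.sum_insert h2, ih, hIccN,
      Finset.sum_insert (by simp)]
    push_cast
    ring

lemma slicerA_neg (α : ℝ) (n : ℕ) (j : ℤ) : slicerA α n (-j) = slicerA α n j := by
  unfold slicerA
  simp [Int.natAbs_neg, neg_eq_zero]

lemma msd_eq (α : ℝ) (n : ℕ) :
    msd α n = 2 * ∑ k ∈ Finset.Icc 1 n, slicerA α n (k:ℤ) * (k:ℝ)^2 := by
  unfold msd
  rw [fold_sum]
  rw [Finset.mul_sum]
  simp only [Int.cast_natCast, Int.cast_neg, Int.cast_zero]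
  rw [show ((0:ℝ))^2 = 0 by norm_num, mul_zero, zero_add]
  apply Finset.sum_congr rfl
  intro k _
  rw [slicerA_neg]
  ring

lemma slicerA_self (α : ℝ) (m : ℕ) : slicerA α m (m:ℤ) = ell α (m-1) := by
  unfold slicerA
  rw [if_pos (by omega)]

lemma slicerA_of_lt (α : ℝ) {m k : ℕ} (h : k < m) (h1 : 1 ≤ k) :
    slicerA α m (k:ℤ) = if k % 2 = m % 2 then ell α (k-1) - ell α (k+1) else 0 := by
  unfold slicerA
  rw [if_neg (by omega)]
  by_cases hp : k % 2 = m % 2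
  · rw [if_pos (by constructor <;> omega), if_neg (by omega), if_pos (by omega)]
    simp
  · rw [if_neg (by omega), if_neg (by omega)]

lemma msd_rec (α : ℝ) (n : ℕ) :
    msd α (n+2) = msd α n + 8*((n:ℝ)+1)*ell α (n+1) := by
  rw [msd_eq, msd_eq]
  have hIcc2 : Finset.Icc 1 (n+2) = insert (n+2) (insert (n+1) (Finset.Icc 1 n)) := by
    ext k; simp; omega
  rw [hIcc2, Finset.sum_insert (by simp), Finset.sum_insert (by simp)]
  have hA2 : slicerA α (n+2) ((n+2:ℕ):ℤ) = ell α (n+1) := by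
    rw [slicerA_self]; norm_num
  have hA1 : slicerA α (n+2) ((n+1:ℕ):ℤ) = 0 := by
    have h := slicerA_of_lt α (m := n+2) (k := n+1) (by omega) (by omega)
    rw [h, if_neg (by omega)]
  have hpt : ∀ k ∈ Finset.Icc 1 n, slicerA α (n+2) (k:ℤ) * (k:ℝ)^2
      = slicerA α n (k:ℤ) * (k:ℝ)^2 - (if k = n then ell α (n+1) * (n:ℝ)^2 else 0) := by
    intro k hk
    simp only [Finset.mem_Icc] at hk
    by_cases hkn' : k = n
    · subst hkn'
      rw [slicerA_of_lt α (m := k+2) (by omega) (by omega), if_pos (by omega),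
        slicerA_self, if_pos rfl]
      ring
    · rw [slicerA_of_lt α (show k < n + 2 by omega) (by omega),
        slicerA_of_lt α (show k < n by omega) (by omega),
        show (n+2) % 2 = n % 2 from by omega, if_neg hkn']
      ring
  have key : ∑ k ∈ Finset.Icc 1 n, slicerA α (n+2) (k:ℤ) * (k:ℝ)^2
      = (∑ k ∈ Finset.Icc 1 n, slicerA α n (k:ℤ) * (k:ℝ)^2) - ell α (n+1) * (n:ℝ)^2 := by
    rw [Finset.sum_congr rfl hpt, Finset.sum_sub_distrib,
      Finset.sum_ite_eq' (Finset.Icc 1 n) n]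
    rcases Nat.eq_zero_or_pos n with h | h
    · subst h; simp
    · rw [if_pos (Finset.mem_Icc.mpr ⟨h, le_refl n⟩)]
  push_cast at hA2 hA1 ⊢
  rw [hA2, hA1, key]
  ring


lemma deriv_lim {β : ℝ} (hβ : 0 < β) :
    Filter.Tendsto (fun x : ℝ => x * ((1+2/x)^β - 1)) Filter.atTop (𝓝 (2*β)) := by
  have hg : HasDerivAt (fun u : ℝ => (1+2*u)^β) (2*β) 0 := by
    have h1 : HasDerivAt (fun u : ℝ => 1+2*u) 2 0 := by
      simpa using ((hasDerivAt_id (0:ℝ)).const_mul 2).const_add 1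
    have h2 : HasDerivAt (fun t : ℝ => t^β) (β * (1:ℝ)^(β-1)) (1+2*0 : ℝ) := by
      rw [show (1+2*0 : ℝ) = 1 by norm_num]
      exact Real.hasDerivAt_rpow_const (Or.inl one_ne_zero)
    have h3 := h2.comp 0 h1
    have h4 : β * (1:ℝ)^(β-1) * 2 = 2*β := by rw [Real.one_rpow]; ring
    rw [h4] at h3
    simpa [Function.comp_def] using h3
  have hslope := hasDerivAt_iff_tendsto_slope.mp hg
  have hcomp : Filter.Tendsto (fun x : ℝ => 1/x) Filter.atTop (𝓝[≠] (0:ℝ)) := by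
    apply tendsto_nhdsWithin_of_tendsto_nhds_of_eventually_within
    · simpa using tendsto_inv_atTop_zero
    · filter_upwards [eventually_gt_atTop (0:ℝ)] with x hx
      simp [ne_of_gt, hx.ne']
  have := hslope.comp hcomp
  apply this.congr'
  filter_upwards [eventually_gt_atTop (0:ℝ)] with x hx
  simp only [Function.comp_apply, slope_def_field]
  have h5 : (1:ℝ)+2*(1/x) = 1+2/x := by ring
  have h6 : ((1:ℝ)+2*0)^β = 1 := by norm_num
  rw [h5, h6, sub_zero, one_div, div_inv_eq_mul, mul_comm]



lemma div_div_aux (a b p : ℝ) (hp : p ≠ 0) : (a/p)/(b/p) = a/b := by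
  rcases eq_or_ne b 0 with rfl | hb
  · simp
  · field_simp

lemma phi_lim {α : ℝ} (hα : 0 < α) (hα2 : α < 2) {c : ℝ} (hc : 0 < c) :
    Filter.Tendsto (fun x : ℝ => 8*(x+1)*(x+1+c)^(-α) / ((x+2)^(2-α) - x^(2-α)))
      Filter.atTop (𝓝 (4/(2-α))) := by
  set β := 2 - α with hβdef
  have hβ : 0 < β := by simp only [hβdef]; linarith
  have hβne : (2*β) ≠ 0 := by positivity
  -- (x+1)/x → 1
  have e1 : Filter.Tendsto (fun x : ℝ => (x+1)/x) Filter.atTop (𝓝 1) := by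
    have h0 : Filter.Tendsto (fun x : ℝ => x⁻¹) Filter.atTop (𝓝 (0:ℝ)) :=
      tendsto_inv_atTop_zero
    have h : Filter.Tendsto (fun x : ℝ => 1 + 1/x) Filter.atTop (𝓝 (1+0)) := by
      apply (tendsto_const_nhds.add h0).congr
      intro x; rw [one_div]
    rw [add_zero] at h
    apply h.congr'
    filter_upwards [eventually_gt_atTop (0:ℝ)] with x hx
    field_simp
  -- ((x+1+c)/x)^(-α) → 1
  have e2 : Filter.Tendsto (fun x : ℝ => ((x+1+c)/x)^(-α)) Filter.atTop (𝓝 1) := by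
    have h : Filter.Tendsto (fun x : ℝ => 1 + (1+c)/x) Filter.atTop (𝓝 (1+0)) := by
      apply tendsto_const_nhds.add
      have h0 : Filter.Tendsto (fun x : ℝ => (1+c) * x⁻¹) Filter.atTop (𝓝 ((1+c)*0)) :=
        tendsto_inv_atTop_zero.const_mul _
      rw [mul_zero] at h0
      apply h0.congr
      intro x
      rw [div_eq_mul_inv]
    rw [add_zero] at h
    have h2 : Filter.Tendsto (fun x : ℝ => (x+1+c)/x) Filter.atTop (𝓝 1) := by
      apply h.congr'
      filter_upwards [eventually_gt_atTop (0:ℝ)] with x hx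
      field_simp; ring
    have hcont : ContinuousAt (fun t : ℝ => t^(-α)) 1 :=
      Real.continuousAt_rpow_const 1 (-α) (Or.inl one_ne_zero)
    have := hcont.tendsto.comp h2
    simpa [Real.one_rpow, Function.comp_def] using this
  -- numerator / x^(β-1) → 8
  have hN : Filter.Tendsto (fun x : ℝ => (8*(x+1)*(x+1+c)^(-α)) / x^(β-1))
      Filter.atTop (𝓝 8) := by
    have hprod : Filter.Tendsto (fun x : ℝ => 8 * ((x+1)/x * ((x+1+c)/x)^(-α)))
        Filter.atTop (𝓝 (8 * (1*1))) := (e1.mul e2).const_mul 8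
    rw [mul_one, mul_one] at hprod
    apply hprod.congr'
    filter_upwards [eventually_gt_atTop (0:ℝ)] with x hx
    have hx1c : (0:ℝ) ≤ x+1+c := by linarith
    rw [Real.div_rpow hx1c hx.le]
    have hxb : x^(β-1) = x * x^(-α) := by
      rw [show β - 1 = 1 + -α from by simp only [hβdef]; ring, Real.rpow_add hx,
        Real.rpow_one]
    rw [hxb]
    have hxne : x ≠ 0 := hx.ne'
    have hxa : x^(-α) ≠ 0 := (Real.rpow_pos_of_pos hx _).ne'
    field_simp
  -- denominator / x^(β-1) → 2β
  have hD : Filter.Tendsto (fun x : ℝ => ((x+2)^β - x^β) / x^(β-1))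
      Filter.atTop (𝓝 (2*β)) := by
    apply (deriv_lim hβ).congr'
    filter_upwards [eventually_gt_atTop (0:ℝ)] with x hx
    have h1 : x + 2 = x * (1+2/x) := by field_simp
    have h2 : (x+2)^β = x^β * (1+2/x)^β := by
      rw [h1, Real.mul_rpow hx.le (by positivity)]
    have h3 : x^β / x^(β-1) = x := by
      rw [← Real.rpow_sub hx, show β - (β-1) = 1 from by ring, Real.rpow_one]
    rw [h2, show x^β * (1+2/x)^β - x^β = x^β * ((1+2/x)^β - 1) from by ring,
      mul_div_right_comm, h3, mul_comm]
  -- combine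
  have hfinal := hN.div hD hβne
  have : (8:ℝ)/(2*β) = 4/β := by
    field_simp
    ring
  rw [this] at hfinal
  apply hfinal.congr'
  filter_upwards [eventually_gt_atTop (0:ℝ)] with x hx
  exact div_div_aux _ _ _ (Real.rpow_pos_of_pos hx _).ne'

lemma tendsto_of_even_odd {u : ℕ → ℝ} {l : ℝ}
    (he : Filter.Tendsto (fun m => u (2*m)) Filter.atTop (𝓝 l))
    (ho : Filter.Tendsto (fun m => u (2*m+1)) Filter.atTop (𝓝 l)) :
    Filter.Tendsto u Filter.atTop (𝓝 l) := by
  rw [Metric.tendsto_atTop] at he ho ⊢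
  intro ε hε
  obtain ⟨N1, h1⟩ := he ε hε
  obtain ⟨N2, h2⟩ := ho ε hε
  refine ⟨2*(max N1 N2) + 1, fun n hn => ?_⟩
  rcases Nat.even_or_odd n with ⟨m, hm⟩ | ⟨m, hm⟩
  · have h : n = 2*m := by omega
    rw [h]; exact h1 m (by omega)
  · have h : n = 2*m+1 := by omega
    rw [h]; exact h2 m (by omega)


lemma stolz {a b : ℕ → ℝ} {L : ℝ} (hb0 : ∀ n, 0 ≤ b n) (hbm : ∀ n, b n < b (n+1))
    (hbt : Filter.Tendsto b Filter.atTop Filter.atTop)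
    (h : Filter.Tendsto (fun n => (a (n+1) - a n) / (b (n+1) - b n)) Filter.atTop (𝓝 L)) :
    Filter.Tendsto (fun n => a n / b n) Filter.atTop (𝓝 L) := by
  have bmono : Monotone b := monotone_nat_of_le_succ (fun n => (hbm n).le)
  rw [Metric.tendsto_atTop] at h ⊢
  intro ε hε
  obtain ⟨N, hN⟩ := h (ε/2) (by positivity)
  set C := |a N - L * b N| with hC
  have hC0 : 0 ≤ C := abs_nonneg _
  obtain ⟨M, hM⟩ := Filter.eventually_atTop.mp (hbt.eventually_ge_atTop (max (b N + 1) (2*(C+1)/ε)))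
  have key : ∀ n, N ≤ n → |a n - a N - L*(b n - b N)| ≤ ε/2 * (b n - b N) := by
    intro n hn
    induction n, hn using Nat.le_induction with
    | base => simp
    | succ n hn ih =>
      have hd : 0 < b (n+1) - b n := sub_pos.2 (hbm n)
      have h1 : |(a (n+1) - a n) - L*(b (n+1) - b n)| ≤ ε/2 * (b (n+1) - b n) := by
        have h2 := hN n hn
        rw [Real.dist_eq] at h2
        have h3 : a (n+1) - a n - L*(b (n+1)-b n)
            = ((a (n+1)-a n)/(b (n+1)-b n) - L) * (b (n+1)-b n) := by
          field_simp
        rw [h3, abs_mul, abs_of_pos hd]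
        exact mul_le_mul_of_nonneg_right h2.le hd.le
      have h4 : a (n+1) - a N - L*(b (n+1) - b N)
          = (a n - a N - L*(b n - b N)) + ((a (n+1) - a n) - L*(b (n+1) - b n)) := by
        ring
      calc |a (n+1) - a N - L*(b (n+1) - b N)|
          ≤ |a n - a N - L*(b n - b N)| + |(a (n+1) - a n) - L*(b (n+1) - b n)| := by
            rw [h4]; exact abs_add_le _ _
        _ ≤ ε/2 * (b n - b N) + ε/2 * (b (n+1) - b n) := add_le_add ih h1
        _ = ε/2 * (b (n+1) - b N) := by ring
  refine ⟨max N M, fun n hn => ?_⟩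
  have hnN : N ≤ n := le_trans (le_max_left _ _) hn
  have hnM : M ≤ n := le_trans (le_max_right _ _) hn
  have hbn := hM n hnM
  have hbnN : b N + 1 ≤ b n := le_trans (le_max_left _ _) hbn
  have hbnC : 2*(C+1)/ε ≤ b n := le_trans (le_max_right _ _) hbn
  have hbpos : 0 < b n := lt_of_lt_of_le (lt_of_le_of_lt (hb0 N) (by linarith)) hbnN
  rw [Real.dist_eq]
  have hdec : a n / b n - L = ((a n - a N - L*(b n - b N)) + (a N - L * b N)) / b n := by
    field_simp; ring
  rw [hdec, abs_div, abs_of_pos hbpos]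
  have hnum : |(a n - a N - L*(b n - b N)) + (a N - L * b N)|
      ≤ ε/2 * b n + C := by
    calc |(a n - a N - L*(b n - b N)) + (a N - L * b N)|
        ≤ |a n - a N - L*(b n - b N)| + C := abs_add_le _ _
      _ ≤ ε/2 * (b n - b N) + C := by linarith [key n hnN]
      _ ≤ ε/2 * b n + C := by nlinarith [hb0 N]
  have h5 : (ε/2 * b n + C) / b n = ε/2 + C / b n := by field_simp
  have h6 : C / b n < ε/2 := by
    have hD : 0 < 2*(C+1)/ε := by positivity
    have : C / b n ≤ C / (2*(C+1)/ε) := div_le_div_of_nonneg_left hC0 hD hbnC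
    have h7 : C / (2*(C+1)/ε) < ε/2 := by
      rw [div_div_eq_mul_div]
      rw [div_lt_iff₀ (by positivity)]
      nlinarith
    linarith
  calc |(a n - a N - L*(b n - b N)) + (a N - L * b N)| / b n
      ≤ (ε/2 * b n + C) / b n := by
        exact div_le_div_of_nonneg_right hnum hbpos.le
    _ = ε/2 + C / b n := h5
    _ < ε := by linarith

lemma sub_lim (α : ℝ) (hα : 0 < α) (hα2 : α < 2) (p : ℕ) :
    Filter.Tendsto (fun m : ℕ => msd α (2*m+p) / ((2*m+p : ℕ) : ℝ)^(2-α))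
      Filter.atTop (𝓝 (4/(2-α))) := by
  have hβ : (0:ℝ) < 2 - α := by linarith
  set c : ℝ := (2:ℝ) ^ (1/α) with hcdef
  have hc : 0 < c := Real.rpow_pos_of_pos two_pos _
  apply stolz
  · intro m
    exact Real.rpow_nonneg (by positivity) _
  · intro m
    apply Real.rpow_lt_rpow (by positivity) _ hβ
    push_cast
    linarith
  · apply (tendsto_rpow_atTop hβ).comp
    apply tendsto_natCast_atTop_atTop.comp
    exact Filter.tendsto_atTop_mono (fun m : ℕ => (by omega : m ≤ 2*m+p)) Filter.tendsto_id
  · have hcast : Filter.Tendsto (fun m : ℕ => ((2*m+p : ℕ) : ℝ)) Filter.atTop Filter.atTop := by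
      apply tendsto_natCast_atTop_atTop.comp
      exact Filter.tendsto_atTop_mono (fun m : ℕ => (by omega : m ≤ 2*m+p)) Filter.tendsto_id
    have := (phi_lim hα hα2 hc).comp hcast
    apply this.congr
    intro m
    simp only [Function.comp_apply]
    have hstep : msd α (2*(m+1)+p) = msd α (2*m+p) + 8*(((2*m+p : ℕ) : ℝ)+1)*ell α ((2*m+p)+1) := by
      rw [show 2*(m+1)+p = (2*m+p)+2 from by ring]
      exact msd_rec α (2*m+p)
    rw [hstep]
    have hell : ell α ((2*m+p)+1) = ((((2*m+p : ℕ) : ℝ))+1+c)^(-α) := by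
      unfold ell
      push_cast
      ring_nf
      rw [hcdef, one_div]
    rw [hell]
    have h2 : ((2*(m+1)+p : ℕ) : ℝ) = ((2*m+p : ℕ) : ℝ) + 2 := by push_cast; ring
    rw [h2]
    ring_nf

theorem slicer_msd_scaling (α : ℝ) (hα : 0 < α) (hα2 : α < 2) :
    Filter.Tendsto (fun n : ℕ => msd α n / (n:ℝ) ^ (2 - α))
      Filter.atTop (nhds (4 / (2 - α))) := by
  apply tendsto_of_even_odd (u := fun n : ℕ => msd α n / (n:ℝ)^(2-α))
  · simpa using sub_lim α hα hα2 0
  · exact sub_lim α hα hα2 1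
end

section
/- Normal diffusion at α = 1: for the slicer map with α = 1, the MSD satisfies ⟨ΔX²_n⟩ / n → 4 as n → ∞. -/
open Filter Topology Finset

lemma ell_one (j : ℕ) : ell 1 j = ((j:ℝ) + 2)⁻¹ := by
  unfold ell
  norm_num
  rw [Real.rpow_neg_one]

lemma msd_zero : msd 1 0 = 0 := by
  simp [msd]

lemma msd_one : msd 1 1 = 1 := by
  have h : Finset.Icc (-((1:ℕ):ℤ)) ((1:ℕ):ℤ) = {-1, 0, 1} := by decide
  rw [msd, h]
  simp [slicerA, ell_one]
  norm_num

lemma msd_step (n : ℕ) : msd 1 (n+2) = msd 1 n + 8*((n:ℝ)+1)/((n:ℝ)+3) := by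
  have hsplit : Finset.Icc (-((n+2:ℕ):ℤ)) ((n+2:ℕ):ℤ) =
      insert (-((n:ℤ)+2)) (insert (-((n:ℤ)+1)) (insert ((n:ℤ)+1) (insert ((n:ℤ)+2)
        (Finset.Icc (-(n:ℤ)) (n:ℤ))))) := by
    ext j
    simp only [Finset.mem_Icc, Finset.mem_insert]
    omega
  set c : ℝ := ell 1 (n+1) * (n:ℝ)^2 with hc
  have key : ∀ j ∈ Finset.Icc (-(n:ℤ)) (n:ℤ),
      slicerA 1 (n+2) j * (j:ℝ)^2 =
      slicerA 1 n j * (j:ℝ)^2 + ((if j = (n:ℤ) then -c else 0) + (if j = -(n:ℤ) then -c else 0)) := by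
    intro j hj
    simp only [Finset.mem_Icc] at hj
    have habs : j.natAbs ≤ n := by omega
    by_cases h1 : j.natAbs = n
    · by_cases hn0 : n = 0
      · subst hn0
        have : j = 0 := by omega
        subst this
        simp [slicerA, hc]
      · have hj0 : j ≠ 0 := by omega
        have hsq : ((j:ℝ))^2 = ((n:ℝ))^2 := by
          have : j = (n:ℤ) ∨ j = -(n:ℤ) := by omega
          rcases this with h | h <;> subst h <;> push_cast <;> ring
        have hne : ¬ (j.natAbs = n + 2) := by omega
        have hlt : j.natAbs < n + 2 ∧ j.natAbs % 2 = (n+2) % 2 := by omega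
        rw [slicerA, slicerA, if_neg hne, if_pos hlt, if_neg hj0, if_pos h1, h1]
        have hone : (j = (n:ℤ) ∧ j ≠ -(n:ℤ)) ∨ (j = -(n:ℤ) ∧ j ≠ (n:ℤ)) := by omega
        rcases hone with ⟨ha, hb⟩ | ⟨ha, hb⟩
        · rw [if_pos ha, if_neg hb, hsq, hc]; ring
        · rw [if_neg hb, if_pos ha, hsq, hc]; ring
    · have hlt : j.natAbs < n := by omega
      have ha : j ≠ (n:ℤ) := by omega
      have hb : j ≠ -(n:ℤ) := by omega
      rw [if_neg ha, if_neg hb]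
      have hne2 : ¬ (j.natAbs = n + 2) := by omega
      rw [slicerA, slicerA, if_neg hne2, if_neg h1]
      have hiff : (j.natAbs < n + 2 ∧ j.natAbs % 2 = (n+2) % 2) ↔ (j.natAbs < n ∧ j.natAbs % 2 = n % 2) := by omega
      by_cases hcond : j.natAbs < n ∧ j.natAbs % 2 = n % 2
      · rw [if_pos (hiff.mpr hcond), if_pos hcond]; ring
      · rw [if_neg (fun h => hcond (hiff.mp h)), if_neg hcond]; ring
  have hmem1 : ¬ (-((n:ℤ)+2)) ∈ insert (-((n:ℤ)+1)) (insert ((n:ℤ)+1) (insert ((n:ℤ)+2) (Finset.Icc (-(n:ℤ)) (n:ℤ)))) := by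
    simp only [Finset.mem_insert, Finset.mem_Icc]; omega
  have hmem2 : ¬ (-((n:ℤ)+1)) ∈ insert ((n:ℤ)+1) (insert ((n:ℤ)+2) (Finset.Icc (-(n:ℤ)) (n:ℤ))) := by
    simp only [Finset.mem_insert, Finset.mem_Icc]; omega
  have hmem3 : ¬ ((n:ℤ)+1) ∈ insert ((n:ℤ)+2) (Finset.Icc (-(n:ℤ)) (n:ℤ)) := by
    simp only [Finset.mem_insert, Finset.mem_Icc]; omega
  have hmem4 : ¬ ((n:ℤ)+2) ∈ Finset.Icc (-(n:ℤ)) (n:ℤ) := by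
    simp only [Finset.mem_Icc]; omega
  rw [msd, hsplit, Finset.sum_insert hmem1, Finset.sum_insert hmem2,
    Finset.sum_insert hmem3, Finset.sum_insert hmem4,
    Finset.sum_congr rfl key]
  rw [Finset.sum_add_distrib, Finset.sum_add_distrib]
  rw [Finset.sum_ite_eq' (Finset.Icc (-(n:ℤ)) (n:ℤ)) ((n:ℤ)) (fun _ => -c),
      Finset.sum_ite_eq' (Finset.Icc (-(n:ℤ)) (n:ℤ)) (-(n:ℤ)) (fun _ => -c)]
  have hm1 : (n:ℤ) ∈ Finset.Icc (-(n:ℤ)) (n:ℤ) := by simp [Finset.mem_Icc]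
  have hm2 : (-(n:ℤ)) ∈ Finset.Icc (-(n:ℤ)) (n:ℤ) := by simp [Finset.mem_Icc]
  rw [if_pos hm1, if_pos hm2]
  have e1 : slicerA 1 (n+2) (-((n:ℤ)+2)) = ell 1 (n+1) := by
    have : (-((n:ℤ)+2)).natAbs = n + 2 := by omega
    rw [slicerA, if_pos this]
    congr 1
  have e2 : slicerA 1 (n+2) (-((n:ℤ)+1)) = 0 := by
    have h1 : ¬ ((-((n:ℤ)+1)).natAbs = n + 2) := by omega
    have h2 : ¬ ((-((n:ℤ)+1)).natAbs < n + 2 ∧ (-((n:ℤ)+1)).natAbs % 2 = (n+2) % 2) := by omega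
    rw [slicerA, if_neg h1, if_neg h2]
  have e3 : slicerA 1 (n+2) ((n:ℤ)+1) = 0 := by
    have h1 : ¬ (((n:ℤ)+1).natAbs = n + 2) := by omega
    have h2 : ¬ (((n:ℤ)+1).natAbs < n + 2 ∧ ((n:ℤ)+1).natAbs % 2 = (n+2) % 2) := by omega
    rw [slicerA, if_neg h1, if_neg h2]
  have e4 : slicerA 1 (n+2) ((n:ℤ)+2) = ell 1 (n+1) := by
    have : ((n:ℤ)+2).natAbs = n + 2 := by omega
    rw [slicerA, if_pos this]
    congr 1
  rw [e1, e2, e3, e4, msd]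
  rw [ell_one] at hc ⊢
  have h3 : (n:ℝ) + 3 ≠ 0 := by positivity
  push_cast at hc ⊢
  rw [hc]
  field_simp
  ring

lemma msd_even (m : ℕ) :
    msd 1 (2*m) = ∑ k ∈ Finset.range m, 8*(2*(k:ℝ)+1)/(2*(k:ℝ)+3) := by
  induction m with
  | zero => simpa using msd_zero
  | succ m ih =>
    have h := msd_step (2*m)
    have : 2*(m+1) = 2*m+2 := by ring
    rw [this, h, ih, Finset.sum_range_succ]
    push_cast
    ring

lemma msd_odd (m : ℕ) :
    msd 1 (2*m+1) = 1 + ∑ k ∈ Finset.range m, 8*(2*(k:ℝ)+2)/(2*(k:ℝ)+4) := by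
  induction m with
  | zero => simpa using msd_one
  | succ m ih =>
    have h := msd_step (2*m+1)
    have : 2*(m+1)+1 = (2*m+1)+2 := by ring
    rw [this, h, ih, Finset.sum_range_succ]
    push_cast
    ring

lemma tendsto_lin_div (a b : ℝ) (ha : 0 < a) :
    Tendsto (fun k : ℕ => b / (a * (k:ℝ) + 3)) atTop (nhds 0) := by
  apply Filter.Tendsto.div_atTop (tendsto_const_nhds)
  apply Filter.tendsto_atTop_add_const_right
  exact (tendsto_natCast_atTop_atTop : Tendsto (fun k : ℕ => (k:ℝ)) atTop atTop).const_mul_atTop ha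

lemma u_even_lim : Tendsto (fun k : ℕ => 8*(2*(k:ℝ)+1)/(2*(k:ℝ)+3)) atTop (nhds 8) := by
  have h := tendsto_lin_div 2 16 (by norm_num)
  have := (tendsto_const_nhds (x := (8:ℝ)) (f := atTop)).sub h
  rw [sub_zero] at this
  refine this.congr (fun k => ?_)
  have : (2*(k:ℝ)+3) ≠ 0 := by positivity
  field_simp
  try ring

lemma u_odd_lim : Tendsto (fun k : ℕ => 8*(2*(k:ℝ)+2)/(2*(k:ℝ)+4)) atTop (nhds 8) := by
  have h : Tendsto (fun k : ℕ => (16:ℝ) / (2 * (k:ℝ) + 1 + 3)) atTop (nhds 0) := by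
    apply Filter.Tendsto.div_atTop (tendsto_const_nhds)
    apply Filter.tendsto_atTop_add_const_right
    apply Filter.tendsto_atTop_add_const_right
    exact (tendsto_natCast_atTop_atTop : Tendsto (fun k : ℕ => (k:ℝ)) atTop atTop).const_mul_atTop (by norm_num)
  have := (tendsto_const_nhds (x := (8:ℝ)) (f := atTop)).sub h
  rw [sub_zero] at this
  refine this.congr (fun k => ?_)
  have : (2*(k:ℝ)+4) ≠ 0 := by positivity
  field_simp
  try ring

lemma aux_lim (c b : ℝ) (hb : 0 ≤ b) (u : ℕ → ℝ) (hu : Tendsto u atTop (nhds 8)) :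
    Tendsto (fun m : ℕ => (c + ∑ k ∈ Finset.range m, u k) / (2*(m:ℝ) + b)) atTop (nhds 4) := by
  have h1 := hu.cesaro
  have h2 : Tendsto (fun m : ℕ => c / (m:ℝ)) atTop (nhds 0) :=
    tendsto_const_div_atTop_nhds_zero_nat c
  have h2b : Tendsto (fun m : ℕ => b / (m:ℝ)) atTop (nhds 0) :=
    tendsto_const_div_atTop_nhds_zero_nat b
  have h3 : Tendsto (fun m : ℕ => (m:ℝ)/(2*(m:ℝ)+b)) atTop (nhds (1/2)) := by
    have hden : Tendsto (fun m : ℕ => (2:ℝ) + b/(m:ℝ)) atTop (nhds 2) := by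
      have := (tendsto_const_nhds (x := (2:ℝ)) (f := atTop)).add h2b
      rwa [add_zero] at this
    have := (tendsto_const_nhds (x := (1:ℝ)) (f := atTop)).div hden (by norm_num)
    refine Tendsto.congr' ?_ this
    filter_upwards [eventually_ge_atTop 1] with m hm
    have hm0 : (m:ℝ) ≠ 0 := by positivity
    have hd : 2*(m:ℝ) + b ≠ 0 := by positivity
    simp only [Pi.div_apply]
    field_simp
    try ring
  have h4 := (h2.add h1).mul h3
  norm_num at h4
  refine Tendsto.congr' ?_ h4
  filter_upwards [eventually_ge_atTop 1] with m hm
  have hm0 : (m:ℝ) ≠ 0 := by positivity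
  have hd : 2*(m:ℝ) + b ≠ 0 := by positivity
  field_simp
  try ring

theorem slicer_normal_diffusion :
    Filter.Tendsto (fun n : ℕ => msd 1 n / (n:ℝ))
      Filter.atTop (nhds 4) := by
  have heven : Tendsto (fun m : ℕ => msd 1 (2*m) / ((2*m : ℕ):ℝ)) atTop (nhds 4) := by
    have := aux_lim 0 0 le_rfl _ u_even_lim
    refine this.congr (fun m => ?_)
    rw [msd_even, zero_add, add_zero]
    push_cast
    ring_nf
  have hodd : Tendsto (fun m : ℕ => msd 1 (2*m+1) / ((2*m+1 : ℕ):ℝ)) atTop (nhds 4) := by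
    have := aux_lim 1 1 zero_le_one _ u_odd_lim
    refine this.congr (fun m => ?_)
    rw [msd_odd]
    push_cast
    ring_nf
  rw [Metric.tendsto_atTop] at heven hodd ⊢
  intro ε hε
  obtain ⟨N1, h1⟩ := heven ε hε
  obtain ⟨N2, h2⟩ := hodd ε hε
  refine ⟨2*N1 + 2*N2 + 2, fun n hn => ?_⟩
  rcases Nat.even_or_odd n with ⟨m, hm⟩ | ⟨m, hm⟩
  · have hne : n = 2*m := by omega
    rw [hne]
    exact h1 m (by omega)
  · have hne : n = 2*m+1 := by omega
    rw [hne]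
    exact h2 m (by omega)
end

section
/- Logarithmic diffusion at α = 2: for the slicer map with α = 2, the MSD satisfies ⟨ΔX²_n⟩ / log n → C for some constant C > 0; in particular ⟨ΔX²_n⟩ → ∞ but ⟨ΔX²_n⟩ / n^γ → 0 for every γ > 0. -/
open Filter Topology Finset

namespace SlicerAux

noncomputable def sq2 : ℝ := Real.sqrt 2

lemma sq2_pos : 0 < sq2 := Real.sqrt_pos.mpr (by norm_num)

lemma sq2_lt : sq2 < 3/2 := by
  rw [sq2, show (3/2:ℝ) = Real.sqrt ((3/2)^2) from (Real.sqrt_sq (by norm_num)).symm]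
  exact Real.sqrt_lt_sqrt (by norm_num) (by norm_num)

lemma jpos (j : ℕ) : 0 < (j:ℝ) + sq2 := by
  have := sq2_pos; positivity

lemma ell_two (j : ℕ) : ell 2 j = (((j:ℝ) + sq2)^2)⁻¹ := by
  have hx := (jpos j).le
  rw [sq2] at hx ⊢
  rw [ell, ← Real.sqrt_eq_rpow, show (-2:ℝ) = -((2:ℕ):ℝ) by norm_num,
    Real.rpow_neg hx, Real.rpow_natCast]

lemma ell_two_pos (j : ℕ) : 0 < ell 2 j := by
  rw [ell_two]; have := jpos j; positivity

lemma sum_Icc_neg (n : ℕ) (f : ℤ → ℝ) (h0 : f 0 = 0) (hs : ∀ j, f (-j) = f j) :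
    ∑ j ∈ Finset.Icc (-(n:ℤ)) n, f j = 2 * ∑ k ∈ Finset.range n, f (k+1) := by
  induction n with
  | zero => simpa using h0
  | succ n ih =>
      have hset : Finset.Icc (-((n:ℤ)+1)) ((n:ℤ)+1)
          = insert (-((n:ℤ)+1)) (insert ((n:ℤ)+1) (Finset.Icc (-(n:ℤ)) n)) := by
        ext j; simp only [Finset.mem_Icc, Finset.mem_insert]; omega
      push_cast
      rw [hset, Finset.sum_insert (by simp only [Finset.mem_insert, Finset.mem_Icc]; omega),
        Finset.sum_insert (by simp only [Finset.mem_Icc]; omega), ih,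
        Finset.sum_range_succ, hs]
      push_cast
      ring

noncomputable def S (n : ℕ) : ℝ := ∑ k ∈ Finset.range n, slicerA 2 n ((k:ℤ)+1) * ((k:ℝ)+1)^2

lemma msd_eq (n : ℕ) : msd 2 n = 2 * S n := by
  rw [msd, sum_Icc_neg n _ (by simp) (fun j => by
    simp only [Int.natAbs_neg, slicerA, neg_eq_zero]
    push_cast
    ring_nf)]
  rw [S]
  congr 1
  refine Finset.sum_congr rfl fun k _ => ?_
  push_cast
  ring

lemma slicerA_coe (n k : ℕ) : slicerA 2 n (k : ℤ) =
    if k = n then ell 2 (n - 1)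
    else if k < n ∧ k % 2 = n % 2 then
      (if k = 0 then 2 * (ell 2 0 - ell 2 1) else ell 2 (k - 1) - ell 2 (k + 1))
    else 0 := by
  simp [slicerA]

noncomputable def B (N k : ℕ) : ℝ :=
  if k + 1 = N then ell 2 (N - 1)
  else if k + 1 < N ∧ (k + 1) % 2 = N % 2 then ell 2 k - ell 2 (k + 2) else 0

lemma slicer_succ (N k : ℕ) : slicerA 2 N ((k:ℤ) + 1) = B N k := by
  rw [show ((k:ℤ) + 1) = ((k + 1 : ℕ) : ℤ) by push_cast; ring, slicerA_coe, B]
  norm_num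

lemma S_eq_B (n : ℕ) : S n = ∑ k ∈ Finset.range n, B n k * ((k:ℝ) + 1)^2 := by
  rw [S]; exact Finset.sum_congr rfl fun k _ => by rw [slicer_succ]

lemma S_rec (n : ℕ) : S (n + 2) = S n + (4 * (n:ℝ) + 4) * ell 2 (n + 1) := by
  cases n with
  | zero =>
      rw [S_eq_B, S_eq_B]
      norm_num [Finset.sum_range_succ, B]
      ring
  | succ m =>
      rw [S_eq_B, S_eq_B, Finset.sum_range_succ, Finset.sum_range_succ,
        Finset.sum_range_succ, Finset.sum_range_succ]
      have hcongr : ∑ k ∈ Finset.range m, B (m + 1 + 2) k * ((k:ℝ) + 1)^2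
          = ∑ k ∈ Finset.range m, B (m + 1) k * ((k:ℝ) + 1)^2 := by
        refine Finset.sum_congr rfl fun k hk => ?_
        rw [Finset.mem_range] at hk
        have : B (m + 1 + 2) k = B (m + 1) k := by
          simp only [B]
          split_ifs <;> first | rfl | omega
        rw [this]
      rw [hcongr]
      have h1 : B (m + 1 + 2) m = ell 2 m - ell 2 (m + 2) := by
        rw [B, if_neg (by omega), if_pos (by omega)]
      have h2 : B (m + 1 + 2) (m + 1) = 0 := by
        rw [B, if_neg (by omega), if_neg (by omega)]
      have h3 : B (m + 1 + 2) (m + 2) = ell 2 (m + 2) := by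
        rw [B, if_pos (by omega)]; norm_num
      have h4 : B (m + 1) m = ell 2 m := by
        rw [B, if_pos (by omega)]; norm_num
      rw [h1, h2, h3, h4]
      push_cast
      ring

noncomputable def c1 (k : ℕ) : ℝ := ∑ i ∈ Finset.range k, (2 * (i:ℝ) + 1) * ell 2 (2 * i + 1)
noncomputable def c0 (k : ℕ) : ℝ := ∑ i ∈ Finset.range k, (2 * (i:ℝ) + 2) * ell 2 (2 * i + 2)

lemma S_closed : ∀ n : ℕ, S n = if n % 2 = 0 then 4 * c1 (n / 2) else ell 2 0 + 4 * c0 (n / 2) := by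
  intro n
  induction n using Nat.strong_induction_on with
  | _ n ih =>
    match n with
    | 0 => simp [S, c1]
    | 1 =>
        rw [S_eq_B]
        norm_num [Finset.sum_range_succ, B, c0]
    | (m + 2) =>
        rw [S_rec, ih m (by omega)]
        have hm2 : (m + 2) / 2 = m / 2 + 1 := by omega
        rcases Nat.even_or_odd m with he | ho
        · have h0 : m % 2 = 0 := Nat.even_iff.mp he
          rw [if_pos h0, if_pos (by omega), hm2, c1, c1, Finset.sum_range_succ]
          have : 2 * (m / 2) + 1 = m + 1 := by omega
          rw [this, show ((2:ℝ) * ↑(m / 2) + 1) = (m:ℝ) + 1 from by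
            exact_mod_cast congrArg (Nat.cast : ℕ → ℝ) this]
          ring
        · have h1 : m % 2 = 1 := Nat.odd_iff.mp ho
          rw [if_neg (by omega), if_neg (by omega), hm2, c0, c0, Finset.sum_range_succ]
          have : 2 * (m / 2) + 2 = m + 1 := by omega
          rw [this, show ((2:ℝ) * ↑(m / 2) + 2) = (m:ℝ) + 1 from by
            exact_mod_cast congrArg (Nat.cast : ℕ → ℝ) this]
          ring


lemma one_lt_sq2 : 1 < sq2 := by
  rw [sq2, show (1:ℝ) = Real.sqrt 1 by simp]
  exact Real.sqrt_lt_sqrt (by norm_num) (by norm_num)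

lemma err_gen (m : ℕ) (t : ℝ) (hm : 1 ≤ m) (ht1 : (m:ℝ) ≤ t) (ht2 : t ≤ (m:ℝ) + 1) :
    |(m:ℝ) * ell 2 m - t⁻¹| ≤ 5 / ((m:ℝ))^2 := by
  have hs2 : sq2^2 = 2 := Real.sq_sqrt (by norm_num)
  have hs1 : 1 < sq2 := one_lt_sq2
  have hs3 : sq2 < 3/2 := sq2_lt
  have hmR : (1:ℝ) ≤ (m:ℝ) := by exact_mod_cast hm
  have ht0 : (0:ℝ) < t := lt_of_lt_of_le (by linarith) ht1
  have hms : (0:ℝ) < (m:ℝ) + sq2 := jpos m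
  rw [ell_two]
  have hfrac : (m:ℝ) * (((m:ℝ) + sq2)^2)⁻¹ - t⁻¹
      = ((m:ℝ) * t - ((m:ℝ) + sq2)^2) / ((((m:ℝ) + sq2)^2) * t) := by
    field_simp
  rw [hfrac, abs_div, abs_of_pos (mul_pos (by positivity) ht0)]
  have hnum : |(m:ℝ) * t - ((m:ℝ) + sq2)^2| ≤ 5 * (m:ℝ) := by
    rw [abs_le]
    constructor <;> nlinarith
  have hden : (m:ℝ)^2 * (m:ℝ) ≤ (((m:ℝ) + sq2)^2) * t := by nlinarith
  calc |(m:ℝ) * t - ((m:ℝ) + sq2)^2| / ((((m:ℝ) + sq2)^2) * t)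
      ≤ (5 * (m:ℝ)) / ((m:ℝ)^2 * (m:ℝ)) := by
        apply div_le_div₀ (by positivity) hnum (by positivity) hden
    _ = 5 / (m:ℝ)^2 := by
        field_simp

lemma summable_of_err {f : ℕ → ℝ} (hf : ∀ i, |f i| ≤ 5 / ((i:ℝ) + 1)^2) : Summable f := by
  have h1 : Summable (fun n : ℕ => 5 * (1 / (n:ℝ)^2)) :=
    (Real.summable_one_div_nat_pow.mpr one_lt_two).mul_left 5
  have h2 : Summable (fun i : ℕ => 5 / ((i:ℝ) + 1)^2) := by
    have := (_root_.summable_nat_add_iff (f := fun n : ℕ => 5 * (1 / (n:ℝ)^2)) 1).mpr h1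
    apply this.congr
    intro i
    push_cast
    ring
  exact Summable.of_norm_bounded h2 (fun i => by simpa using hf i)

noncomputable def harm (k : ℕ) : ℝ := ∑ i ∈ Finset.range k, ((i:ℝ) + 1)⁻¹

lemma tendsto_harm_sub_log :
    Tendsto (fun k : ℕ => harm k - Real.log k) atTop (𝓝 Real.eulerMascheroniConstant) := by
  apply Real.tendsto_harmonic_sub_log.congr
  intro k
  congr 1
  rw [harmonic, harm]
  push_cast
  rfl

lemma tendsto_c_sub_log (c : ℕ → ℝ) (g : ℕ → ℝ) (hg : ∀ i, |g i| ≤ 5 / ((i:ℝ) + 1)^2)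
    (hc : ∀ k, c k = ∑ i ∈ Finset.range k, ((1/2) * ((i:ℝ) + 1)⁻¹ + g i)) :
    ∃ L : ℝ, Tendsto (fun k : ℕ => c k - (1/2) * Real.log k) atTop (𝓝 L) := by
  have hs : Summable g := summable_of_err hg
  refine ⟨∑' i, g i + (1/2) * Real.eulerMascheroniConstant, ?_⟩
  have h1 : Tendsto (fun k : ℕ => ∑ i ∈ Finset.range k, g i) atTop (𝓝 (∑' i, g i)) :=
    hs.hasSum.tendsto_sum_nat
  have h2 := tendsto_harm_sub_log.const_mul (1/2 : ℝ)
  have h3 := h1.add h2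
  apply h3.congr
  intro k
  rw [hc k, Finset.sum_add_distrib, harm, mul_sub, Finset.mul_sum]
  ring

lemma exists_L1 : ∃ L : ℝ, Tendsto (fun k : ℕ => c1 k - (1/2) * Real.log k) atTop (𝓝 L) := by
  apply tendsto_c_sub_log c1 (fun i => (2 * (i:ℝ) + 1) * ell 2 (2 * i + 1) - (1/2) * ((i:ℝ) + 1)⁻¹)
  · intro i
    have h := err_gen (2 * i + 1) (2 * ((i:ℝ) + 1)) (by omega) (by push_cast; linarith)
      (by push_cast; linarith)
    have e1 : ((2 * i + 1 : ℕ) : ℝ) = 2 * (i:ℝ) + 1 := by push_cast; ring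
    have e2 : (2 * ((i:ℝ) + 1))⁻¹ = (1/2) * ((i:ℝ) + 1)⁻¹ := by
      rw [mul_inv]; ring
    rw [e1, e2] at h
    refine h.trans ?_
    have hb : ((i:ℝ) + 1)^2 ≤ (2 * (i:ℝ) + 1)^2 := by nlinarith [Nat.cast_nonneg (α := ℝ) i]
    apply div_le_div_of_nonneg_left (by norm_num) (by positivity) hb
  · intro k
    rw [c1]
    exact Finset.sum_congr rfl fun i _ => by ring

lemma exists_L0 : ∃ L : ℝ, Tendsto (fun k : ℕ => c0 k - (1/2) * Real.log k) atTop (𝓝 L) := by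
  apply tendsto_c_sub_log c0 (fun i => (2 * (i:ℝ) + 2) * ell 2 (2 * i + 2) - (1/2) * ((i:ℝ) + 1)⁻¹)
  · intro i
    have h := err_gen (2 * i + 2) ((2 * i + 2 : ℕ) : ℝ) (by omega) le_rfl (by linarith)
    have e1 : ((2 * i + 2 : ℕ) : ℝ) = 2 * (i:ℝ) + 2 := by push_cast; ring
    have e2 : (2 * (i:ℝ) + 2)⁻¹ = (1/2) * ((i:ℝ) + 1)⁻¹ := by
      rw [show 2 * (i:ℝ) + 2 = 2 * ((i:ℝ) + 1) by ring, mul_inv]; ring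
    rw [e1, e2] at h
    refine h.trans ?_
    have hb : ((i:ℝ) + 1)^2 ≤ (2 * (i:ℝ) + 2)^2 := by nlinarith [Nat.cast_nonneg (α := ℝ) i]
    apply div_le_div_of_nonneg_left (by norm_num) (by positivity) hb
  · intro k
    rw [c0]
    exact Finset.sum_congr rfl fun i _ => by ring


lemma hlogTop : Tendsto (fun n : ℕ => Real.log n) atTop atTop :=
  Real.tendsto_log_atTop.comp tendsto_natCast_atTop_atTop

lemma hhalf : Tendsto (fun n : ℕ => n / 2) atTop atTop := by
  apply tendsto_atTop_atTop.mpr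
  intro b
  exact ⟨2 * b, fun a ha => by omega⟩

lemma main_tendsto : Tendsto (fun n : ℕ => msd 2 n / Real.log n) atTop (𝓝 4) := by
  obtain ⟨L1, hL1⟩ := exists_L1
  obtain ⟨L0, hL0⟩ := exists_L0
  set K : ℝ := 8 * (|L1| + 1) + 8 * (|L0| + 1) + 4 * Real.log 4 + 2 * ell 2 0 with hK
  have hev1 : ∀ᶠ n : ℕ in atTop, |c1 (n / 2) - (1/2) * Real.log ↑(n / 2)| < |L1| + 1 :=
    hhalf.eventually (hL1.abs.eventually_lt_const (lt_add_one _))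
  have hev0 : ∀ᶠ n : ℕ in atTop, |c0 (n / 2) - (1/2) * Real.log ↑(n / 2)| < |L0| + 1 :=
    hhalf.eventually (hL0.abs.eventually_lt_const (lt_add_one _))
  have hgap : ∀ᶠ n : ℕ in atTop, |Real.log ↑n - Real.log ↑(n / 2)| ≤ Real.log 4 := by
    filter_upwards [eventually_ge_atTop 2] with n hn
    have h1 : (1:ℝ) ≤ ↑(n / 2) := by exact_mod_cast (by omega : 1 ≤ n / 2)
    have h2 : (n:ℝ) ≤ 4 * ↑(n / 2) := by exact_mod_cast (by omega : n ≤ 4 * (n / 2))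
    have h3 : (↑(n / 2):ℝ) ≤ (n:ℝ) := by exact_mod_cast Nat.div_le_self n 2
    have hl1 : Real.log ↑(n / 2) ≤ Real.log ↑n := Real.log_le_log (by linarith) h3
    have hl2 : Real.log ↑n ≤ Real.log 4 + Real.log ↑(n / 2) := by
      rw [← Real.log_mul (by norm_num) (by linarith)]
      exact Real.log_le_log (by linarith) h2
    have hlog4 : (0:ℝ) ≤ Real.log 4 := Real.log_nonneg (by norm_num)
    rw [abs_le]
    constructor <;> linarith
  have hbound : ∀ᶠ n : ℕ in atTop, |msd 2 n - 4 * Real.log ↑n| ≤ K := by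
    filter_upwards [hev1, hev0, hgap] with n h1 h0 hg
    have hE0 : (0:ℝ) < ell 2 0 := ell_two_pos 0
    rw [msd_eq, S_closed]
    have ha1 := abs_lt.mp h1
    have ha0 := abs_lt.mp h0
    have hag := abs_le.mp hg
    have habsL1 := abs_nonneg L1
    have habsL0 := abs_nonneg L0
    have hlog4 : (0:ℝ) ≤ Real.log 4 := Real.log_nonneg (by norm_num)
    by_cases hp : n % 2 = 0
    · rw [if_pos hp, abs_le]
      constructor <;> [skip; skip] <;>
        · obtain ⟨g1, g2⟩ := ha1
          obtain ⟨g3, g4⟩ := hag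
          linarith
    · rw [if_neg hp, abs_le]
      constructor <;> [skip; skip] <;>
        · obtain ⟨g1, g2⟩ := ha0
          obtain ⟨g3, g4⟩ := hag
          linarith
  have hquot0 : Tendsto (fun n : ℕ => (msd 2 n - 4 * Real.log ↑n) / Real.log ↑n)
      atTop (𝓝 0) := by
    refine squeeze_zero_norm' (a := fun n : ℕ => K / Real.log ↑n) ?_
      ((tendsto_const_nhds (x := K)).div_atTop hlogTop)
    filter_upwards [hbound, eventually_ge_atTop 2] with n hb hn
    have hlp : (0:ℝ) < Real.log ↑n :=
      Real.log_pos (by exact_mod_cast (by omega : 1 < n))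
    rw [norm_div, Real.norm_eq_abs, Real.norm_eq_abs, abs_of_pos hlp]
    gcongr
  have heq : ∀ᶠ n : ℕ in atTop,
      (msd 2 n - 4 * Real.log ↑n) / Real.log ↑n + 4 = msd 2 n / Real.log ↑n := by
    filter_upwards [eventually_ge_atTop 2] with n hn
    have hlp : (0:ℝ) < Real.log ↑n :=
      Real.log_pos (by exact_mod_cast (by omega : 1 < n))
    field_simp
    ring
  have h := hquot0.add (tendsto_const_nhds (x := (4:ℝ)))
  rw [zero_add] at h
  exact h.congr' heq

end SlicerAux

theorem slicer_log_diffusion :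
    ∃ C : ℝ, 0 < C ∧
      Filter.Tendsto (fun n : ℕ => msd 2 n / Real.log n) Filter.atTop (nhds C) ∧
      Filter.Tendsto (fun n : ℕ => msd 2 n) Filter.atTop Filter.atTop ∧
      ∀ γ : ℝ, 0 < γ →
        Filter.Tendsto (fun n : ℕ => msd 2 n / (n:ℝ) ^ γ) Filter.atTop (nhds 0) := by
  refine ⟨4, by norm_num, SlicerAux.main_tendsto, ?_, ?_⟩
  · have h := Filter.Tendsto.pos_mul_atTop (by norm_num : (0:ℝ) < 4) SlicerAux.main_tendsto SlicerAux.hlogTop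
    apply h.congr'
    filter_upwards [eventually_ge_atTop 2] with n hn
    have hlp : (0:ℝ) < Real.log ↑n :=
      Real.log_pos (by exact_mod_cast (by omega : 1 < n))
    exact div_mul_cancel₀ _ (ne_of_gt hlp)
  · intro γ hγ
    have hlr : Tendsto (fun n : ℕ => Real.log ↑n / (n:ℝ) ^ γ) atTop (𝓝 0) :=
      ((isLittleO_log_rpow_atTop hγ).tendsto_div_nhds_zero).comp
        tendsto_natCast_atTop_atTop
    have h := SlicerAux.main_tendsto.mul hlr
    rw [mul_zero] at h
    apply h.congr'
    filter_upwards [eventually_ge_atTop 2] with n hn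
    have hlp : (0:ℝ) < Real.log ↑n :=
      Real.log_pos (by exact_mod_cast (by omega : 1 < n))
    have hrp : (0:ℝ) < (n:ℝ) ^ γ :=
      Real.rpow_pos_of_pos (by exact_mod_cast (by omega : 0 < n)) γ
    field_simp
end

section
/- Higher even moments: for α ∈ (0,2) and even integer p > 2, the p-th moment ⟨ΔX^p_n⟩ = Σ_{j=−n}^{n} A_j j^p of the slicer distribution satisfies ⟨ΔX^p_n⟩ / n^{p−α} → 2p/(p − α) as n → ∞. -/
open Filter Topology Finset

lemma sum_symm (α : ℝ) (n p : ℕ) (hp : 0 < p) (hpe : Even p) :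
    ∑ j ∈ Finset.Icc (-(n:ℤ)) (n:ℤ), slicerA α n j * (j:ℝ)^p
      = 2 * ∑ j ∈ Finset.range (n+1), slicerA α n (j:ℤ) * (j:ℝ)^p := by
  have hsplit : Finset.Icc (-(n:ℤ)) (n:ℤ)
      = Finset.Icc (-(n:ℤ)) (-1) ∪ Finset.Icc 0 (n:ℤ) := by
    ext x; simp only [Finset.mem_Icc, Finset.mem_union]; omega
  have hdisj : Disjoint (Finset.Icc (-(n:ℤ)) (-1)) (Finset.Icc 0 (n:ℤ)) := by
    simp only [Finset.disjoint_left, Finset.mem_Icc]; omega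
  rw [hsplit, Finset.sum_union hdisj]
  have himg : Finset.Icc (-(n:ℤ)) (-1) = (Finset.Icc 1 (n:ℤ)).image (fun x => -x) := by
    ext x
    simp only [Finset.mem_Icc, Finset.mem_image]
    constructor
    · intro h; exact ⟨-x, by omega, by omega⟩
    · rintro ⟨y, hy, rfl⟩; omega
  have h1 : ∑ j ∈ Finset.Icc (-(n:ℤ)) (-1), slicerA α n j * (j:ℝ)^p
      = ∑ j ∈ Finset.Icc (1:ℤ) (n:ℤ), slicerA α n j * (j:ℝ)^p := by
    rw [himg, Finset.sum_image (by intro a _ b _ h; exact neg_injective h)]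
    refine Finset.sum_congr rfl fun j hj => ?_
    rw [slicerA_neg]
    have : ((-j : ℤ) : ℝ) = -((j:ℤ):ℝ) := by push_cast; ring
    rw [this, hpe.neg_pow]
  have h2 : Finset.Icc (0:ℤ) (n:ℤ) = insert 0 (Finset.Icc 1 (n:ℤ)) := by
    ext x; simp only [Finset.mem_Icc, Finset.mem_insert]; omega
  have h3 : ∑ j ∈ Finset.Icc (0:ℤ) (n:ℤ), slicerA α n j * (j:ℝ)^p
      = ∑ j ∈ Finset.Icc (1:ℤ) (n:ℤ), slicerA α n j * (j:ℝ)^p := by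
    rw [h2, Finset.sum_insert (by simp)]
    simp [zero_pow hp.ne']
  have h4 : ∑ j ∈ Finset.Icc (1:ℤ) (n:ℤ), slicerA α n j * (j:ℝ)^p
      = ∑ j ∈ Finset.range (n+1), slicerA α n (j:ℤ) * (j:ℝ)^p := by
    have himg2 : Finset.Icc (1:ℤ) (n:ℤ) = (Finset.Icc 1 n).image (fun x : ℕ => (x:ℤ)) := by
      ext x
      simp only [Finset.mem_Icc, Finset.mem_image]
      constructor
      · intro h; exact ⟨x.toNat, by omega, by omega⟩
      · rintro ⟨y, hy, rfl⟩; omega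
    rw [himg2, Finset.sum_image (by intro a _ b _ h; exact Nat.cast_injective h)]
    rw [Finset.range_eq_Ico, show Finset.Ico 0 (n+1) = insert 0 (Finset.Icc 1 n) by
      ext x; simp only [Finset.mem_Ico, Finset.mem_insert, Finset.mem_Icc]; omega]
    rw [Finset.sum_insert (by simp)]
    simp [zero_pow hp.ne']
  rw [h1, h3, h4]; ring

lemma abel_sum (a v : ℕ → ℝ) (K : ℕ) :
    (a 0 * v 0 + ∑ k ∈ Finset.Icc 1 K, (a k - a (k-1)) * v k)
      = ∑ k ∈ Finset.range K, a k * (v k - v (k+1)) + a K * v K := by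
  induction K with
  | zero => simp
  | succ K ih =>
      rw [Finset.sum_Icc_succ_top (by omega), Finset.sum_range_succ, ← add_assoc, ih]
      simp only [Nat.add_sub_cancel]
      ring

lemma sum_support (α : ℝ) (n p : ℕ) (hn : 1 ≤ n) (hp : 0 < p) :
    ∑ j ∈ Finset.range (n+1), slicerA α n (j:ℤ) * (j:ℝ)^p
      = ∑ k ∈ Finset.range ((n-1)/2 + 1),
          slicerA α n ((n - 2*k : ℕ):ℤ) * ((n - 2*k : ℕ):ℝ)^p := by
  set K := (n-1)/2 with hK
  have himg : (Finset.range (K+1)).image (fun k => n - 2*k) ⊆ Finset.range (n+1) := by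
    intro x hx; simp only [Finset.mem_image, Finset.mem_range] at hx ⊢; omega
  have hinj : ∀ a ∈ Finset.range (K+1), ∀ b ∈ Finset.range (K+1),
      n - 2*a = n - 2*b → a = b := by
    intro a ha b hb h
    simp only [Finset.mem_range] at ha hb
    omega
  rw [← Finset.sum_image (f := fun j : ℕ => slicerA α n (j:ℤ) * (j:ℝ)^p)
      (g := fun k => n - 2*k) hinj]
  symm
  apply Finset.sum_subset himg
  intro j hj hjim
  simp only [Finset.mem_image, Finset.mem_range, not_exists, not_and] at hjim
  simp only [Finset.mem_range] at hj
  rcases Nat.eq_zero_or_pos j with rfl | hj1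
  · simp [zero_pow hp.ne']
  · have h1 : ¬ j = n := fun h => hjim 0 (by omega) (by omega)
    have h2 : ¬(j < n ∧ j % 2 = n % 2) := by
      rintro ⟨hlt, hmod⟩
      exact hjim ((n-j)/2) (by omega) (by omega)
    have hjn : slicerA α n (j:ℤ) = 0 := by
      rw [slicerA]
      simp only [Int.natAbs_natCast]
      rw [if_neg h1, if_neg h2]
    rw [hjn, zero_mul]

lemma slicerA_eval (α : ℝ) (n k : ℕ) (hn : 1 ≤ n) (hk : k ≤ (n-1)/2) :
    slicerA α n ((n - 2*k : ℕ):ℤ)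
      = if k = 0 then ell α (n-1) else ell α (n-2*k-1) - ell α (n-2*k+1) := by
  have h2k : 2*k ≤ n - 1 := by omega
  rcases Nat.eq_zero_or_pos k with rfl | hk1
  · simp only [Nat.mul_zero, Nat.sub_zero, if_pos rfl]
    rw [slicerA]
    simp
  · have hj1 : 1 ≤ n - 2*k := by omega
    have hjn : ¬ (n - 2*k) = n := by omega
    rw [slicerA]
    simp only [Int.natAbs_natCast]
    rw [if_neg hjn, if_pos ⟨by omega, by omega⟩, if_neg (by omega : ¬ ((n - 2*k : ℕ):ℤ) = 0),
      if_neg (by omega : ¬ k = 0)]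

lemma closed_form (α : ℝ) (n p : ℕ) (hn : 1 ≤ n) (hp : 0 < p) :
    ∑ j ∈ Finset.range (n+1), slicerA α n (j:ℤ) * (j:ℝ)^p
      = ∑ k ∈ Finset.range ((n-1)/2),
          ell α (n-2*k-1) * (((n - 2*k : ℕ):ℝ)^p - ((n - 2*(k+1) : ℕ):ℝ)^p)
        + ell α (n - 2*((n-1)/2) - 1) * ((n - 2*((n-1)/2) : ℕ):ℝ)^p := by
  rw [sum_support α n p hn hp]
  set K := (n-1)/2 with hK
  have hsplit : Finset.range (K+1) = insert 0 (Finset.Icc 1 K) := by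
    ext x; simp only [Finset.mem_range, Finset.mem_insert, Finset.mem_Icc]; omega
  rw [hsplit, Finset.sum_insert (by simp)]
  have heval : ∀ k ∈ Finset.Icc 1 K,
      slicerA α n ((n - 2*k : ℕ):ℤ) * ((n - 2*k : ℕ):ℝ)^p
        = (ell α (n-2*k-1) - ell α (n-2*(k-1)-1)) * ((n - 2*k : ℕ):ℝ)^p := by
    intro k hk
    simp only [Finset.mem_Icc] at hk
    rw [slicerA_eval α n k hn hk.2, if_neg (by omega : ¬ k = 0)]
    congr 3
    omega
  rw [Finset.sum_congr rfl heval]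
  rw [slicerA_eval α n 0 hn (by omega), if_pos rfl]
  have := abel_sum (fun k => ell α (n-2*k-1)) (fun k => ((n - 2*k : ℕ):ℝ)^p) K
  simp only [Nat.mul_zero, Nat.sub_zero] at this ⊢
  rw [this]

lemma pow_sub_pow_le_real (a b : ℝ) (ha : 0 ≤ a) (hab : a ≤ b) (m : ℕ) :
    b^m - a^m ≤ m * (b - a) * b^(m-1) := by
  induction m with
  | zero => simp
  | succ m ih =>
      rcases Nat.eq_zero_or_pos m with rfl | hm
      · simp
      · have hb : 0 ≤ b := ha.trans hab
        have h1 : b^(m+1) - a^(m+1) = b * (b^m - a^m) + (b - a) * a^m := by ring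
        have h2 : b * (b^m - a^m) ≤ b * (m * (b - a) * b^(m-1)) :=
          mul_le_mul_of_nonneg_left ih hb
        have h3 : b * (m * (b - a) * b^(m-1)) = m * (b - a) * b^m := by
          rw [show b * (m * (b - a) * b^(m-1)) = m * (b-a) * (b^(m-1) * b) by ring,
            ← pow_succ, Nat.sub_add_cancel hm]
        have h4 : (b - a) * a^m ≤ (b - a) * b^m :=
          mul_le_mul_of_nonneg_left (pow_le_pow_left₀ ha hab m) (by linarith)
        push_cast
        have : (m+1) * (b-a) * b^((m+1)-1) = m * (b-a) * b^m + (b-a)*b^m := by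
          simp only [Nat.add_sub_cancel]; ring
        linarith

lemma term_upper (α : ℝ) (hα : 0 < α) (hα2 : α < 2) (p : ℕ) (hp : 2 < p) (x : ℝ) (hx : 3 ≤ x) :
    (x - 1 + (2:ℝ)^(1/(α:ℝ)))^(-α) * (x^p - (x-2)^p)
      ≤ ((p:ℝ)/((p:ℝ)-α)) * (x^((p:ℝ)-α) - (x-2)^((p:ℝ)-α)) := by
  set c : ℝ := (2:ℝ)^(1/α) with hc
  have hc1 : 1 ≤ c := by
    rw [hc, show (1:ℝ) = (2:ℝ)^(0:ℝ) by simp]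
    exact Real.rpow_le_rpow_of_exponent_le one_le_two (by positivity)
  set s : ℝ := (p:ℝ) - 1 - α with hs
  have hs0 : 0 < s := by
    have : (3:ℝ) ≤ p := by exact_mod_cast hp
    rw [hs]; linarith
  have hxx : x - 2 ≤ x := by linarith
  have hL : IntervalIntegrable (fun t => (x - 1 + c)^(-α) * ((p:ℝ) * t^(p-1)))
      MeasureTheory.volume (x-2) x := by
    apply Continuous.intervalIntegrable
    continuity
  have hR : IntervalIntegrable (fun t => (p:ℝ) * t^s) MeasureTheory.volume (x-2) x := by
    apply ContinuousOn.intervalIntegrable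
    apply ContinuousOn.mul continuousOn_const
    apply ContinuousOn.rpow_const continuousOn_id
    intro t ht
    rw [Set.uIcc_of_le hxx] at ht
    exact Or.inl (by dsimp; linarith [ht.1])
  have hmono := intervalIntegral.integral_mono_on hxx hL hR ?_
  · have e1 : ∫ t in (x-2)..x, (x - 1 + c)^(-α) * ((p:ℝ) * t^(p-1))
        = (x - 1 + c)^(-α) * (x^p - (x-2)^p) := by
      rw [intervalIntegral.integral_const_mul, intervalIntegral.integral_const_mul,
        integral_pow]
      rw [show (p-1)+1 = p by omega]
      have hp0 : ((p:ℕ):ℝ) ≠ 0 := by positivity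
      field_simp
      rw [Nat.cast_sub (by omega : 1 ≤ p)]; ring
    have e2 : ∫ t in (x-2)..x, (p:ℝ) * t^s
        = ((p:ℝ)/((p:ℝ)-α)) * (x^((p:ℝ)-α) - (x-2)^((p:ℝ)-α)) := by
      rw [intervalIntegral.integral_const_mul, integral_rpow (Or.inl (by linarith))]
      rw [show s + 1 = (p:ℝ) - α by rw [hs]; ring]
      ring
    rw [e1, e2] at hmono
    exact hmono
  · intro t ht
    obtain ⟨ht1, ht2⟩ := ht
    have ht0 : 0 < t := by linarith
    have h1 : (x - 1 + c)^(-α) ≤ t^(-α) :=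
      Real.rpow_le_rpow_of_nonpos ht0 (by linarith) (by linarith)
    have h2 : t^(-α) * t^((p:ℝ)-1) = t^s := by
      rw [← Real.rpow_add ht0]; congr 1; rw [hs]; ring
    have h3 : (t:ℝ)^(p-1) = t^((p:ℝ)-1) := by
      rw [← Real.rpow_natCast t (p-1), Nat.cast_sub (by omega : 1 ≤ p), Nat.cast_one]
    calc (x - 1 + c)^(-α) * ((p:ℝ) * t^(p-1))
        ≤ t^(-α) * ((p:ℝ) * t^(p-1)) := by
          apply mul_le_mul_of_nonneg_right h1
          positivity
      _ = (p:ℝ) * t^s := by rw [h3, ← h2]; ring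

lemma term_lower (α : ℝ) (hα : 0 < α) (hα2 : α < 2) (p : ℕ) (hp : 2 < p) (x : ℝ) (hx : 3 ≤ x) :
    (p:ℝ) * ( ((x + (1 + (2:ℝ)^(1/α)))^((p:ℝ)-α) - (x - 2 + (1 + (2:ℝ)^(1/α)))^((p:ℝ)-α))/((p:ℝ)-α)
      - (1 + (2:ℝ)^(1/α))*((p:ℝ)-1)*((x + (1 + (2:ℝ)^(1/α)))^((p:ℝ)-1-α) - (x - 2 + (1 + (2:ℝ)^(1/α)))^((p:ℝ)-1-α))/((p:ℝ)-1-α) )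
      ≤ (x - 1 + (2:ℝ)^(1/α))^(-α) * (x^p - (x-2)^p) := by
  set c : ℝ := (2:ℝ)^(1/α) with hc
  have hc1 : 1 ≤ c := by
    rw [hc, show (1:ℝ) = (2:ℝ)^(0:ℝ) by simp]
    exact Real.rpow_le_rpow_of_exponent_le one_le_two (by positivity)
  set C : ℝ := 1 + c with hC
  set s : ℝ := (p:ℝ) - 1 - α with hs
  have hp3 : (3:ℝ) ≤ p := by exact_mod_cast hp
  have hs0 : 0 < s := by rw [hs]; linarith
  have hxx : x - 2 ≤ x := by linarith
  have hR : IntervalIntegrable (fun t => (x - 1 + c)^(-α) * ((p:ℝ) * t^(p-1)))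
      MeasureTheory.volume (x-2) x := by
    apply Continuous.intervalIntegrable; continuity
  have hLc : ContinuousOn (fun t : ℝ => (p:ℝ) * ((t+C)^s - C*((p:ℝ)-1)*(t+C)^(s-1)))
      (Set.uIcc (x-2) x) := by
    rw [Set.uIcc_of_le hxx]
    have hne : ∀ t ∈ Set.Icc (x-2) x, t + C ≠ 0 ∨ (0:ℝ) ≤ s := fun t ht => Or.inr hs0.le
    have hbase : ContinuousOn (fun t : ℝ => t + C) (Set.Icc (x-2) x) :=
      (continuous_id.add continuous_const).continuousOn
    have hne' : ∀ t ∈ Set.Icc (x-2) x, t + C ≠ 0 := by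
      intro t ht; have := ht.1; dsimp; nlinarith
    exact continuousOn_const.mul ((hbase.rpow_const (fun t ht => Or.inl (hne' t ht))).sub
      (continuousOn_const.mul (hbase.rpow_const (fun t ht => Or.inl (hne' t ht)))))
  have hL : IntervalIntegrable (fun t => (p:ℝ) * ((t+C)^s - C*((p:ℝ)-1)*(t+C)^(s-1)))
      MeasureTheory.volume (x-2) x := hLc.intervalIntegrable
  have hmono := intervalIntegral.integral_mono_on hxx hL hR ?_
  · have e1 : ∫ t in (x-2)..x, (x - 1 + c)^(-α) * ((p:ℝ) * t^(p-1))
        = (x - 1 + c)^(-α) * (x^p - (x-2)^p) := by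
      rw [intervalIntegral.integral_const_mul, intervalIntegral.integral_const_mul,
        integral_pow, show (p-1)+1 = p by omega]
      have hp0 : ((p:ℕ):ℝ) ≠ 0 := by positivity
      field_simp
      rw [Nat.cast_sub (by omega : 1 ≤ p)]; ring
    have eA : ∫ t in (x-2)..x, (t+C)^s = ((x+C)^(s+1) - (x-2+C)^(s+1))/(s+1) := by
      rw [intervalIntegral.integral_comp_add_right (fun u => u^s) C,
        integral_rpow (Or.inl (by linarith))]
    have eB : ∫ t in (x-2)..x, (t+C)^(s-1) = ((x+C)^s - (x-2+C)^s)/s := by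
      rw [intervalIntegral.integral_comp_add_right (fun u => u^(s-1)) C,
        integral_rpow (Or.inl (by linarith))]
      rw [sub_add_cancel]
    have e2 : ∫ t in (x-2)..x, (p:ℝ) * ((t+C)^s - C*((p:ℝ)-1)*(t+C)^(s-1))
        = (p:ℝ) * ( ((x+C)^((p:ℝ)-α) - (x-2+C)^((p:ℝ)-α))/((p:ℝ)-α)
            - C*((p:ℝ)-1)*((x+C)^s - (x-2+C)^s)/s ) := by
      rw [intervalIntegral.integral_const_mul]
      have hi1 : IntervalIntegrable (fun t : ℝ => (t+C)^s) MeasureTheory.volume (x-2) x := by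
        apply ContinuousOn.intervalIntegrable
        rw [Set.uIcc_of_le hxx]
        exact ((continuous_id.add continuous_const).continuousOn).rpow_const
          (fun t ht => Or.inr hs0.le)
      have hi2 : IntervalIntegrable (fun t : ℝ => C*((p:ℝ)-1)*(t+C)^(s-1))
          MeasureTheory.volume (x-2) x := by
        apply ContinuousOn.intervalIntegrable
        rw [Set.uIcc_of_le hxx]
        apply continuousOn_const.mul
        apply ((continuous_id.add continuous_const).continuousOn).rpow_const
        intro t ht; left; dsimp; have := ht.1; nlinarith
      rw [intervalIntegral.integral_sub hi1 hi2, eA,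
        intervalIntegral.integral_const_mul, eB]
      rw [show s + 1 = (p:ℝ) - α by rw [hs]; ring]
      ring
    rw [e1, e2] at hmono
    exact hmono
  · intro t ht
    obtain ⟨ht1, ht2⟩ := ht
    have ht0 : 0 < t := by linarith
    have hy0 : 0 < t + C := by linarith
    have h1 : (t+C)^(-α) ≤ (x - 1 + c)^(-α) :=
      Real.rpow_le_rpow_of_nonpos (by linarith) (by rw [hC]; linarith) (by linarith)
    have h2 := pow_sub_pow_le_real t (t+C) ht0.le (by linarith) (p-1)
    have hcast : (((p-1:ℕ)):ℝ) = (p:ℝ) - 1 := by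
      rw [Nat.cast_sub (by omega : 1 ≤ p), Nat.cast_one]
    rw [hcast, show t + C - t = C by ring, show (p-1)-1 = p-2 by omega] at h2
    -- h2 : (t+C)^(p-1) - t^(p-1) ≤ (p-1) * C * (t+C)^(p-2)
    have hBnn : (0:ℝ) ≤ (t+C)^(-α) := Real.rpow_nonneg hy0.le _
    have hTnn : (0:ℝ) ≤ t^(p-1) := by positivity
    have e3 : (t+C)^(-α) * (t+C)^(p-1) = (t+C)^s := by
      rw [← Real.rpow_natCast (t+C) (p-1), hcast, ← Real.rpow_add hy0]
      congr 1; rw [hs]; ring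
    have e4 : (t+C)^(-α) * (t+C)^(p-2) = (t+C)^(s-1) := by
      rw [← Real.rpow_natCast (t+C) (p-2),
        Nat.cast_sub (by omega : 2 ≤ p), ← Real.rpow_add hy0]
      congr 1; rw [hs]; push_cast; ring
    have key : (t+C)^s - C*((p:ℝ)-1)*(t+C)^(s-1) ≤ (x - 1 + c)^(-α) * t^(p-1) := by
      calc (t+C)^s - C*((p:ℝ)-1)*(t+C)^(s-1)
          = (t+C)^(-α) * ((t+C)^(p-1) - ((p:ℝ)-1)*C*(t+C)^(p-2)) := by
            rw [← e3, ← e4]; ring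
        _ ≤ (t+C)^(-α) * t^(p-1) := mul_le_mul_of_nonneg_left (by linarith) hBnn
        _ ≤ (x - 1 + c)^(-α) * t^(p-1) := mul_le_mul_of_nonneg_right h1 hTnn
    calc (p:ℝ) * ((t+C)^s - C*((p:ℝ)-1)*(t+C)^(s-1))
        ≤ (p:ℝ) * ((x - 1 + c)^(-α) * t^(p-1)) := by
          apply mul_le_mul_of_nonneg_left key (by positivity)
      _ = (x - 1 + c)^(-α) * ((p:ℝ) * t^(p-1)) := by ring

lemma ell_cast (α : ℝ) (j : ℕ) (hj : 1 ≤ j) :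
    ell α (j-1) = ((j:ℝ) - 1 + (2:ℝ)^(1/α))^(-α) := by
  rw [ell]; congr 2
  rw [Nat.cast_sub hj, Nat.cast_one]

lemma ell_le_one (α : ℝ) (hα : 0 < α) (m : ℕ) : ell α m ≤ 1 := by
  have hc1 : (1:ℝ) ≤ (2:ℝ)^(1/α) := by
    rw [show (1:ℝ) = (2:ℝ)^(0:ℝ) by simp]
    exact Real.rpow_le_rpow_of_exponent_le one_le_two (by positivity)
  rw [ell]
  apply Real.rpow_le_one_of_one_le_of_nonpos
  · have : (0:ℝ) ≤ (m:ℝ) := Nat.cast_nonneg m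
    linarith
  · linarith

lemma ell_nonneg (α : ℝ) (m : ℕ) : 0 ≤ ell α m := Real.rpow_nonneg (by positivity) _

lemma sum_bounds (α : ℝ) (hα : 0 < α) (hα2 : α < 2) (p : ℕ) (hp : 2 < p) (hpe : Even p)
    (n : ℕ) (hn : 3 ≤ n) :
    2*(p:ℝ)*(((n:ℝ)+(1+(2:ℝ)^(1/α)))^((p:ℝ)-α)/((p:ℝ)-α)
        - (1+(2:ℝ)^(1/α))*((p:ℝ)-1)*((n:ℝ)+(1+(2:ℝ)^(1/α)))^((p:ℝ)-1-α)/((p:ℝ)-1-α))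
      - 2*(p:ℝ)*(2+(1+(2:ℝ)^(1/α)))^((p:ℝ)-α)/((p:ℝ)-α)
      ≤ ∑ j ∈ Finset.Icc (-(n:ℤ)) (n:ℤ), slicerA α n j * (j:ℝ)^p
    ∧ ∑ j ∈ Finset.Icc (-(n:ℤ)) (n:ℤ), slicerA α n j * (j:ℝ)^p
      ≤ 2*((p:ℝ)/((p:ℝ)-α)*(n:ℝ)^((p:ℝ)-α) + 2^p) := by
  have hc1 : (1:ℝ) ≤ (2:ℝ)^(1/α) := by
    rw [show (1:ℝ) = (2:ℝ)^(0:ℝ) by simp]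
    exact Real.rpow_le_rpow_of_exponent_le one_le_two (by positivity)
  set c : ℝ := (2:ℝ)^(1/α) with hc
  set C : ℝ := 1 + c with hC
  have hp3 : (3:ℝ) ≤ (p:ℝ) := by exact_mod_cast hp
  have hβ0 : (0:ℝ) < (p:ℝ) - α := by linarith
  have hs0 : (0:ℝ) < (p:ℝ) - 1 - α := by linarith
  set K := (n-1)/2 with hKdef
  rw [sum_symm α n p (by omega) hpe, closed_form α n p (by omega) (by omega)]
  rw [← hKdef]
  have hcast2 : ∀ k, k < K → ((n - 2*(k+1) : ℕ):ℝ) = ((n - 2*k:ℕ):ℝ) - 2 := by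
    intro k hk
    have h1 : 2*(k+1) ≤ n := by omega
    have h2 : 2*k ≤ n := by omega
    rw [Nat.cast_sub h1, Nat.cast_sub h2]
    push_cast; ring
  have hell : ∀ k, k < K → ell α (n-2*k-1) = (((n-2*k:ℕ):ℝ) - 1 + c)^(-α) := by
    intro k hk
    exact ell_cast α (n-2*k) (by omega)
  have hx3 : ∀ k, k < K → (3:ℝ) ≤ ((n-2*k:ℕ):ℝ) := by
    intro k hk
    have : 3 ≤ n - 2*k := by omega
    exact_mod_cast this
  constructor
  · -- lower bound
    set g : ℕ → ℝ := fun k => ((((n-2*k:ℕ)):ℝ)+C)^((p:ℝ)-α)/((p:ℝ)-α)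
        - C*((p:ℝ)-1)*((((n-2*k:ℕ)):ℝ)+C)^((p:ℝ)-1-α)/((p:ℝ)-1-α) with hg
    have hterm_lo : ∀ k ∈ Finset.range K,
        (p:ℝ)*(g k - g (k+1))
          ≤ ell α (n-2*k-1) * (((n - 2*k : ℕ):ℝ)^p - ((n - 2*(k+1) : ℕ):ℝ)^p) := by
      intro k hk
      rw [Finset.mem_range] at hk
      have hlow := term_lower α hα hα2 p hp ((n-2*k:ℕ):ℝ) (hx3 k hk)
      rw [hell k hk, hcast2 k hk]
      rw [← hc, ← hC] at hlow
      refine le_trans (le_of_eq ?_) hlow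
      rw [hg]
      dsimp only
      rw [hcast2 k hk]
      ring
    have hsum_lo : (p:ℝ)*(g 0 - g K)
        ≤ ∑ k ∈ Finset.range K,
            ell α (n-2*k-1) * (((n - 2*k : ℕ):ℝ)^p - ((n - 2*(k+1) : ℕ):ℝ)^p) := by
      calc (p:ℝ)*(g 0 - g K) = ∑ k ∈ Finset.range K, (p:ℝ)*(g k - g (k+1)) := by
            rw [← Finset.mul_sum, Finset.sum_range_sub' g K]
        _ ≤ _ := Finset.sum_le_sum hterm_lo
    have hbnd_lo : 0 ≤ ell α (n-2*K-1) * ((n - 2*K : ℕ):ℝ)^p :=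
      mul_nonneg (ell_nonneg α _) (by positivity)
    have hg0 : g 0 = (((n:ℝ))+C)^((p:ℝ)-α)/((p:ℝ)-α)
        - C*((p:ℝ)-1)*(((n:ℝ))+C)^((p:ℝ)-1-α)/((p:ℝ)-1-α) := by
      rw [hg]; norm_num
    have hgK : g K ≤ (2+C)^((p:ℝ)-α)/((p:ℝ)-α) := by
      rw [hg]
      dsimp only
      have hjm : ((n-2*K:ℕ):ℝ) ≤ 2 := by
        have : n - 2*K ≤ 2 := by omega
        exact_mod_cast this
      have hjm0 : (0:ℝ) ≤ ((n-2*K:ℕ):ℝ) := Nat.cast_nonneg _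
      have h1 : (((n-2*K:ℕ):ℝ)+C)^((p:ℝ)-α) ≤ (2+C)^((p:ℝ)-α) :=
        Real.rpow_le_rpow (by linarith) (by linarith) hβ0.le
      have h2 : 0 ≤ C*((p:ℝ)-1)*((((n-2*K:ℕ)):ℝ)+C)^((p:ℝ)-1-α)/((p:ℝ)-1-α) := by
        apply div_nonneg _ hs0.le
        apply mul_nonneg (mul_nonneg (by linarith) (by linarith))
        exact Real.rpow_nonneg (by linarith) _
      have h3 : (((n-2*K:ℕ):ℝ)+C)^((p:ℝ)-α)/((p:ℝ)-α) ≤ (2+C)^((p:ℝ)-α)/((p:ℝ)-α) := by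
        gcongr
      linarith
    rw [hg0] at hsum_lo
    have hpgK : (p:ℝ) * g K ≤ (p:ℝ) * ((2+C)^((p:ℝ)-α)/((p:ℝ)-α)) :=
      mul_le_mul_of_nonneg_left hgK (by positivity)
    clear_value g C c K
    generalize hA : ((n:ℝ) + C)^((p:ℝ)-α) = A at hsum_lo ⊢
    generalize hB : ((n:ℝ) + C)^((p:ℝ)-1-α) = B at hsum_lo ⊢
    generalize hE : ((2:ℝ) + C)^((p:ℝ)-α) = E at hpgK ⊢
    generalize hS : ∑ k ∈ Finset.range K, ell α (n - 2 * k - 1) * ((((n - 2 * k : ℕ)):ℝ) ^ p - (((n - 2 * (k + 1) : ℕ)):ℝ) ^ p) = S at hsum_lo ⊢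
    ring_nf at hsum_lo hpgK hbnd_lo ⊢
    linarith [hsum_lo, hbnd_lo, hpgK]
  · -- upper bound
    have hterm_up : ∀ k ∈ Finset.range K,
        ell α (n-2*k-1) * (((n - 2*k : ℕ):ℝ)^p - ((n - 2*(k+1) : ℕ):ℝ)^p)
          ≤ (p:ℝ)/((p:ℝ)-α) * (((n - 2*k : ℕ):ℝ)^((p:ℝ)-α) - ((n - 2*(k+1) : ℕ):ℝ)^((p:ℝ)-α)) := by
      intro k hk
      rw [Finset.mem_range] at hk
      have hupp := term_upper α hα hα2 p hp ((n-2*k:ℕ):ℝ) (hx3 k hk)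
      rw [hell k hk, hcast2 k hk]
      rw [← hc] at hupp
      exact hupp
    have hsum_up : ∑ k ∈ Finset.range K,
        ell α (n-2*k-1) * (((n - 2*k : ℕ):ℝ)^p - ((n - 2*(k+1) : ℕ):ℝ)^p)
          ≤ (p:ℝ)/((p:ℝ)-α) * ((n:ℝ)^((p:ℝ)-α) - ((n - 2*K : ℕ):ℝ)^((p:ℝ)-α)) := by
      calc _ ≤ ∑ k ∈ Finset.range K, (p:ℝ)/((p:ℝ)-α)
            * (((n - 2*k : ℕ):ℝ)^((p:ℝ)-α) - ((n - 2*(k+1) : ℕ):ℝ)^((p:ℝ)-α)) :=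
            Finset.sum_le_sum hterm_up
        _ = _ := by
            rw [← Finset.mul_sum,
              Finset.sum_range_sub' (fun k => ((n - 2*k : ℕ):ℝ)^((p:ℝ)-α)) K]
            norm_num
    have hbnd_up : ell α (n-2*K-1) * ((n - 2*K : ℕ):ℝ)^p ≤ 2^p := by
      have h1 : ell α (n-2*K-1) ≤ 1 := ell_le_one α hα _
      have h2 : ((n - 2*K : ℕ):ℝ)^p ≤ 2^p := by
        apply pow_le_pow_left₀ (Nat.cast_nonneg _)
        have : n - 2*K ≤ 2 := by omega
        exact_mod_cast this
      calc ell α (n-2*K-1) * ((n - 2*K : ℕ):ℝ)^p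
          ≤ 1 * ((n - 2*K : ℕ):ℝ)^p :=
            mul_le_mul_of_nonneg_right h1 (by positivity)
        _ ≤ 2^p := by rw [one_mul]; exact h2
    have hFK : (0:ℝ) ≤ ((n - 2*K : ℕ):ℝ)^((p:ℝ)-α) := Real.rpow_nonneg (Nat.cast_nonneg _) _
    have hq : (0:ℝ) ≤ (p:ℝ)/((p:ℝ)-α) := by positivity
    nlinarith [hsum_up, hbnd_up, mul_nonneg hq hFK]

theorem slicer_higher_even_moments (α : ℝ) (hα : 0 < α) (hα2 : α < 2)
    (p : ℕ) (hp : 2 < p) (hpe : Even p) :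
    Filter.Tendsto
      (fun n : ℕ =>
        (∑ j ∈ Finset.Icc (-(n:ℤ)) (n:ℤ), slicerA α n j * (j:ℝ)^p) / (n:ℝ) ^ ((p:ℝ) - α))
      Filter.atTop (nhds (2 * p / ((p:ℝ) - α))) := by
  have hc1 : (1:ℝ) ≤ (2:ℝ)^(1/α) := by
    rw [show (1:ℝ) = (2:ℝ)^(0:ℝ) by simp]
    exact Real.rpow_le_rpow_of_exponent_le one_le_two (by positivity)
  set c : ℝ := (2:ℝ)^(1/α) with hc
  set C : ℝ := 1 + c with hC
  have hp3 : (3:ℝ) ≤ (p:ℝ) := by exact_mod_cast hp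
  have hβ0 : (0:ℝ) < (p:ℝ) - α := by linarith
  have hs0 : (0:ℝ) < (p:ℝ) - 1 - α := by linarith
  have hC0 : (0:ℝ) < C := by rw [hC]; linarith
  -- basic limits
  have limq : Filter.Tendsto (fun n : ℕ => ((n:ℝ)+C)/(n:ℝ)) Filter.atTop (nhds 1) := by
    have t0 : Filter.Tendsto (fun n : ℕ => 1 + C/(n:ℝ)) Filter.atTop (nhds 1) := by
      have h2 := (tendsto_const_div_atTop_nhds_zero_nat C).const_add (1:ℝ)
      simpa using h2
    apply t0.congr'
    filter_upwards [Filter.eventually_ge_atTop 1] with n hn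
    have hn0 : (0:ℝ) < (n:ℝ) := by exact_mod_cast hn
    field_simp
  have limA : Filter.Tendsto (fun n : ℕ => ((n:ℝ)+C)^((p:ℝ)-α)/(n:ℝ)^((p:ℝ)-α))
      Filter.atTop (nhds 1) := by
    have t1 := limq.rpow_const (p := (p:ℝ)-α) (Or.inr hβ0.le)
    rw [Real.one_rpow] at t1
    apply t1.congr'
    filter_upwards [Filter.eventually_ge_atTop 1] with n hn
    have hn0 : (0:ℝ) < (n:ℝ) := by exact_mod_cast hn
    rw [Real.div_rpow (by linarith) hn0.le]
  have limq2 : Filter.Tendsto (fun n : ℕ => (((n:ℝ)+C)/(n:ℝ))^((p:ℝ)-1-α))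
      Filter.atTop (nhds 1) := by
    have t1 := limq.rpow_const (p := (p:ℝ)-1-α) (Or.inr hs0.le)
    rwa [Real.one_rpow] at t1
  have limB : Filter.Tendsto (fun n : ℕ => ((n:ℝ)+C)^((p:ℝ)-1-α)/(n:ℝ)^((p:ℝ)-α))
      Filter.atTop (nhds 0) := by
    have t2 : Filter.Tendsto
        (fun n : ℕ => (((n:ℝ)+C)/(n:ℝ))^((p:ℝ)-1-α) * (1/(n:ℝ)))
        Filter.atTop (nhds 0) := by
      have := limq2.mul tendsto_one_div_atTop_nhds_zero_nat
      simpa using this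
    apply t2.congr'
    filter_upwards [Filter.eventually_ge_atTop 1] with n hn
    have hn0 : (0:ℝ) < (n:ℝ) := by exact_mod_cast hn
    rw [Real.div_rpow (by linarith) hn0.le]
    rw [show (p:ℝ) - α = ((p:ℝ)-1-α) + 1 by ring, Real.rpow_add hn0, Real.rpow_one]
    field_simp
  have limpow : Filter.Tendsto (fun n : ℕ => (n:ℝ)^((p:ℝ)-α)) Filter.atTop Filter.atTop :=
    (tendsto_rpow_atTop hβ0).comp tendsto_natCast_atTop_atTop
  have limD : ∀ D : ℝ, Filter.Tendsto (fun n : ℕ => D/(n:ℝ)^((p:ℝ)-α))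
      Filter.atTop (nhds 0) := fun D => tendsto_const_nhds.div_atTop limpow
  -- lower sequence
  set lo : ℕ → ℝ := fun n =>
    (2*(p:ℝ)*(((n:ℝ)+C)^((p:ℝ)-α)/((p:ℝ)-α)
        - C*((p:ℝ)-1)*((n:ℝ)+C)^((p:ℝ)-1-α)/((p:ℝ)-1-α))
      - 2*(p:ℝ)*(2+C)^((p:ℝ)-α)/((p:ℝ)-α)) / (n:ℝ)^((p:ℝ)-α) with hlo
  have limlo : Filter.Tendsto lo Filter.atTop (nhds (2*(p:ℝ)/((p:ℝ)-α))) := by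
    have expand : ∀ n : ℕ, lo n
        = (2*(p:ℝ)/((p:ℝ)-α)) * (((n:ℝ)+C)^((p:ℝ)-α)/(n:ℝ)^((p:ℝ)-α))
          - (2*(p:ℝ)*C*((p:ℝ)-1)/((p:ℝ)-1-α)) * (((n:ℝ)+C)^((p:ℝ)-1-α)/(n:ℝ)^((p:ℝ)-α))
          - (2*(p:ℝ)*(2+C)^((p:ℝ)-α)/((p:ℝ)-α))/(n:ℝ)^((p:ℝ)-α) := by
      intro n; rw [hlo]; ring
    rw [show (2*(p:ℝ)/((p:ℝ)-α))
        = (2*(p:ℝ)/((p:ℝ)-α))*1 - (2*(p:ℝ)*C*((p:ℝ)-1)/((p:ℝ)-1-α))*0 - 0 by ring]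
    exact Filter.Tendsto.congr (fun n => (expand n).symm)
      (((limA.const_mul _).sub (limB.const_mul _)).sub (limD _))
  -- upper sequence
  set hi : ℕ → ℝ := fun n =>
    (2*((p:ℝ)/((p:ℝ)-α)*(n:ℝ)^((p:ℝ)-α) + 2^p)) / (n:ℝ)^((p:ℝ)-α) with hhi
  have limhi : Filter.Tendsto hi Filter.atTop (nhds (2*(p:ℝ)/((p:ℝ)-α))) := by
    have expand : hi =ᶠ[Filter.atTop]
        (fun n : ℕ => 2*(p:ℝ)/((p:ℝ)-α) + (2*2^p)/(n:ℝ)^((p:ℝ)-α)) := by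
      filter_upwards [Filter.eventually_ge_atTop 1] with n hn
      have hn0 : (0:ℝ) < (n:ℝ) := by exact_mod_cast hn
      have hpow : (0:ℝ) < (n:ℝ)^((p:ℝ)-α) := Real.rpow_pos_of_pos hn0 _
      rw [hhi]
      field_simp
    rw [show (2*(p:ℝ)/((p:ℝ)-α)) = 2*(p:ℝ)/((p:ℝ)-α) + 0 by ring]
    exact Filter.Tendsto.congr' expand.symm (tendsto_const_nhds.add (limD _))
  refine tendsto_of_tendsto_of_tendsto_of_le_of_le' limlo limhi ?_ ?_
  · -- lo ≤ f
    filter_upwards [Filter.eventually_ge_atTop 3] with n hn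
    have hn0 : (0:ℝ) < (n:ℝ) := by positivity
    have hpow : (0:ℝ) < (n:ℝ)^((p:ℝ)-α) := Real.rpow_pos_of_pos (by exact_mod_cast hn0) _
    rw [hlo]
    exact div_le_div_of_nonneg_right (sum_bounds α hα hα2 p hp hpe n hn).1 hpow.le
  · -- f ≤ hi
    filter_upwards [Filter.eventually_ge_atTop 3] with n hn
    have hpow : (0:ℝ) < (n:ℝ)^((p:ℝ)-α) := by
      apply Real.rpow_pos_of_pos
      have : (3:ℝ) ≤ (n:ℝ) := by exact_mod_cast hn
      linarith
    rw [hhi]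
    exact div_le_div_of_nonneg_right (sum_bounds α hα hα2 p hp hpe n hn).2 hpow.le
end

section
/- Monotonicity for the moment sums: for 0 < α ≤ 2, integer p ≥ 3 and c = 2^{1/α}, the function g(x) = ((x+1)^p − x^p)/(2x + 1 + c)^α is strictly increasing for x > 0. -/
lemma keyL (r : ℕ) (x : ℝ) (hx : 0 < x) :
    2 * x ^ (r + 1) < (x + 1) ^ (r + 2) - x ^ (r + 2) := by
  induction r with
  | zero =>
    have e1 : (x + 1) ^ (0 + 2) - x ^ (0 + 2) = 2 * x + 1 := by ring
    have e2 : 2 * x ^ (0 + 1) = 2 * x := by ring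
    linarith
  | succ n ih =>
    have h1 : (x + 1) ^ (n + 3) = (x + 1) * (x + 1) ^ (n + 2) := by ring
    have h2 : x ^ (n + 3) = x * x ^ (n + 2) := by ring
    have h3 : x ^ (n + 2) = x * x ^ (n + 1) := by ring
    nlinarith [pow_pos hx (n + 1), pow_pos hx (n + 2)]

lemma keyIneq (r : ℕ) (x α c : ℝ) (hx : 0 < x) (hα : 0 < α) (hα2 : α ≤ 2)
    (hc : 1 ≤ c) :
    2 * α * ((x + 1) ^ (r + 3) - x ^ (r + 3)) <
      ((r : ℝ) + 3) * ((x + 1) ^ (r + 2) - x ^ (r + 2)) * (2 * x + 1 + c) := by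
  have hA := keyL r x hx
  have hApos : 0 < (x + 1) ^ (r + 2) - x ^ (r + 2) := by
    have : (0:ℝ) < 2 * x ^ (r + 1) := by positivity
    linarith
  have hB : (x + 1) ^ (r + 3) - x ^ (r + 3)
      = (x + 1) * ((x + 1) ^ (r + 2) - x ^ (r + 2)) + x ^ (r + 2) := by ring
  have hX : x ^ (r + 2) = x * x ^ (r + 1) := by ring
  have hr3 : (3:ℝ) ≤ (r : ℝ) + 3 := by
    have h0 : (0:ℝ) ≤ (r : ℝ) := Nat.cast_nonneg r
    linarith
  have hs : 0 < 2 * x + 1 + c := by linarith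
  have hBpos : 0 < (x + 1) ^ (r + 3) - x ^ (r + 3) := by
    rw [hB]
    have h1 : 0 < (x + 1) * ((x + 1) ^ (r + 2) - x ^ (r + 2)) :=
      mul_pos (by linarith) hApos
    have h2 : 0 < x ^ (r + 2) := pow_pos hx _
    linarith
  have step1 : 2 * α * ((x + 1) ^ (r + 3) - x ^ (r + 3))
      ≤ 4 * ((x + 1) ^ (r + 3) - x ^ (r + 3)) := by nlinarith
  have step2 : 3 * ((x + 1) ^ (r + 2) - x ^ (r + 2)) * (2 * x + 1 + c)
      ≤ ((r : ℝ) + 3) * ((x + 1) ^ (r + 2) - x ^ (r + 2)) * (2 * x + 1 + c) :=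
    mul_le_mul_of_nonneg_right (mul_le_mul_of_nonneg_right hr3 hApos.le) hs.le
  have step3 : 4 * ((x + 1) ^ (r + 3) - x ^ (r + 3))
      < 3 * ((x + 1) ^ (r + 2) - x ^ (r + 2)) * (2 * x + 1 + c) := by
    rw [hB]
    nlinarith [mul_pos hx hApos, mul_lt_mul_of_pos_left hA hx]
  linarith

theorem moment_sum_monotonicity (α : ℝ) (hα : 0 < α) (hα2 : α ≤ 2)
    (p : ℕ) (hp : 3 ≤ p) :
    StrictMonoOn
      (fun x : ℝ => ((x + 1)^p - x^p) / (2*x + 1 + (2:ℝ)^(1/α)) ^ α)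
      (Set.Ioi (0:ℝ)) := by
  set c : ℝ := (2:ℝ) ^ (1/α) with hcdef
  have hc : 1 ≤ c := by
    rw [hcdef]
    calc (1:ℝ) = (2:ℝ) ^ (0:ℝ) := (Real.rpow_zero 2).symm
      _ ≤ (2:ℝ) ^ (1/α) := Real.rpow_le_rpow_of_exponent_le one_le_two (by positivity)
  obtain ⟨r, rfl⟩ : ∃ r, p = r + 3 := ⟨p - 3, by omega⟩
  apply strictMonoOn_of_deriv_pos (convex_Ioi 0)
  · apply ContinuousOn.div
    · fun_prop
    · apply ContinuousOn.rpow_const (by fun_prop)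
      intro x _
      exact Or.inr hα.le
    · intro x hx
      have hx0 : (0:ℝ) < x := hx
      have hs : 0 < 2 * x + 1 + c := by linarith
      exact (Real.rpow_pos_of_pos hs α).ne'
  · intro x hx
    rw [interior_Ioi] at hx
    have hx0 : (0:ℝ) < x := hx
    have hs : 0 < 2 * x + 1 + c := by linarith
    have hnum : HasDerivAt (fun x : ℝ => (x + 1) ^ (r + 3) - x ^ (r + 3))
        ((↑(r + 3) : ℝ) * (x + 1) ^ (r + 2) * 1 - (↑(r + 3) : ℝ) * x ^ (r + 2)) x :=
      (((hasDerivAt_id x).add_const 1).pow (r + 3)).sub (hasDerivAt_pow (r + 3) x)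
    have hlin : HasDerivAt (fun x : ℝ => 2 * x + 1 + c) 2 x := by
      have heq : (fun x : ℝ => 2 * x + 1 + c) = fun x : ℝ => 2 * x + (1 + c) := by
        funext y; ring
      rw [heq]
      simpa using ((hasDerivAt_id x).const_mul 2).add_const (1 + c)
    have hden : HasDerivAt (fun x : ℝ => (2 * x + 1 + c) ^ α)
        (2 * α * (2 * x + 1 + c) ^ (α - 1)) x :=
      hlin.rpow_const (Or.inl hs.ne')
    have hdenne : (2 * x + 1 + c) ^ α ≠ 0 := (Real.rpow_pos_of_pos hs α).ne'
    have hdiv : HasDerivAt (fun x : ℝ => ((x + 1) ^ (r + 3) - x ^ (r + 3)) / (2 * x + 1 + c) ^ α) _ x :=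
      hnum.div hden hdenne
    rw [hdiv.deriv]
    apply div_pos
    · have hk := keyIneq r x α c hx0 hα hα2 hc
      have hpow1 : 0 < (2 * x + 1 + c) ^ (α - 1) := Real.rpow_pos_of_pos hs _
      have hpow : (2 * x + 1 + c) ^ α = (2 * x + 1 + c) ^ (α - 1) * (2 * x + 1 + c) := by
        rw [show α = (α - 1) + 1 by ring, Real.rpow_add_one hs.ne']
        ring_nf
      calc (0:ℝ) < (2 * x + 1 + c) ^ (α - 1) *
            (((r : ℝ) + 3) * ((x + 1) ^ (r + 2) - x ^ (r + 2)) * (2 * x + 1 + c)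
              - 2 * α * ((x + 1) ^ (r + 3) - x ^ (r + 3))) :=
          mul_pos hpow1 (by linarith)
        _ = ((↑(r + 3) : ℝ) * (x + 1) ^ (r + 2) * 1 - (↑(r + 3) : ℝ) * x ^ (r + 2)) *
              (2 * x + 1 + c) ^ α
            - ((x + 1) ^ (r + 3) - x ^ (r + 3)) * (2 * α * (2 * x + 1 + c) ^ (α - 1)) := by
          rw [hpow]; push_cast; ring
    · positivity
end
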